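/- arXiv:1410.5097 — 5 statements merged into one kernel-verified Lean document; each statement's English description precedes it below -/
import Mathlib

section
/- Let f : ℝ → ℝ be three times continuously differentiable on an open interval D, let x* ∈ D be a simple zero of f, and define c₂ = f''(x*)/(2 f'(x*)). For x near x* with e = x - x*, set y = x - f(x)/f'(x) and t(x) = f(y)/f(x). Then t(x)/e → c₂ as e → 0. -/
open Filter Set Topology

theorem stmt12 (D : Set ℝ) (hD : IsOpen D) (hDconn : D.OrdConnected)
    (f : ℝ → ℝ) (hf : ContDiffOn ℝ 3 f D)
    (x₀ : ℝ) (hx₀ : x₀ ∈ D) (hroot : f x₀ = 0) (hder : deriv f x₀ ≠ 0) :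
    Filter.Tendsto
      (fun x : ℝ => (f (x - f x / deriv f x) / f x) / (x - x₀))
      (nhdsWithin x₀ {x₀}ᶜ)
      (nhds (iteratedDeriv 2 f x₀ / (2 * deriv f x₀))) := by
  have hDnhds : D ∈ 𝓝 x₀ := hD.mem_nhds hx₀
  have hf1 : ContDiffOn ℝ 2 (deriv f) D := hf.deriv_of_isOpen hD (by norm_num)
  have hf2 : ContDiffOn ℝ 1 (deriv (deriv f)) D := hf1.deriv_of_isOpen hD (by norm_num)
  -- differentiability and continuity facts
  have hdf : ∀ x ∈ D, HasDerivAt f (deriv f x) x := fun x hx =>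
    (((hf.differentiableOn (by norm_num)).differentiableAt (hD.mem_nhds hx)).hasDerivAt)
  have hdf' : ∀ x ∈ D, HasDerivAt (deriv f) (deriv (deriv f) x) x := fun x hx =>
    (((hf1.differentiableOn (by norm_num)).differentiableAt (hD.mem_nhds hx)).hasDerivAt)
  have hcf : ContinuousAt f x₀ := (hf.continuousOn.continuousAt hDnhds)
  have hcf' : ContinuousAt (deriv f) x₀ := (hf1.continuousOn.continuousAt hDnhds)
  have hcf'' : ContinuousAt (deriv (deriv f)) x₀ := (hf2.continuousOn.continuousAt hDnhds)
  -- the slope function h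
  set h : ℝ → ℝ := fun z => if z = x₀ then deriv f x₀ else f z / (z - x₀) with hh
  have hfact : ∀ z, f z = h z * (z - x₀) := by
    intro z
    by_cases hz : z = x₀
    · simp [hh, hz, hroot]
    · simp only [hh, hz, if_false]
      rw [div_mul_cancel₀ _ (sub_ne_zero.mpr hz)]
  have hslope : Tendsto h (𝓝 x₀) (𝓝 (deriv f x₀)) := by
    rw [← nhdsNE_sup_pure, tendsto_sup]
    constructor
    · have := hdf x₀ hx₀
      rw [hasDerivAt_iff_tendsto_slope] at this
      refine this.congr' ?_
      filter_upwards [self_mem_nhdsWithin] with z hz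
      simp only [mem_compl_iff, mem_singleton_iff] at hz
      simp [hh, hz, slope_def_field, div_eq_div_iff (sub_ne_zero.mpr hz) (sub_ne_zero.mpr hz),
        hroot]
    · have : h x₀ = deriv f x₀ := by simp [hh]
      rw [tendsto_pure_left]
      intro s hs
      exact mem_of_mem_nhds (this ▸ hs)
  -- limit of the Newton increment ratio via L'Hôpital
  have hlh : Tendsto (fun x => ((x - x₀) * deriv f x - f x) / (x - x₀) ^ 2) (𝓝[≠] x₀)
      (𝓝 (deriv (deriv f) x₀ / 2)) := by
    apply HasDerivAt.lhopital_zero_nhdsNE (f' := fun x => (x - x₀) * deriv (deriv f) x)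
      (g' := fun x => 2 * (x - x₀))
    · filter_upwards [nhdsWithin_le_nhds hDnhds] with x hx
      have h1 : HasDerivAt (fun x => (x - x₀) * deriv f x)
          (1 * deriv f x + (x - x₀) * deriv (deriv f) x) x :=
        (((hasDerivAt_id x).sub_const x₀).mul (hdf' x hx))
      have := h1.sub (hdf x hx)
      exact this.congr_deriv (by ring)
    · filter_upwards with x
      have : HasDerivAt (fun x => (x - x₀) ^ 2) (2 * (x - x₀) ^ 1 * 1) x :=
        (((hasDerivAt_id x).sub_const x₀).pow 2)
      convert this using 1
      ring
    · filter_upwards [self_mem_nhdsWithin] with x hx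
      simp only [mem_compl_iff, mem_singleton_iff] at hx
      have := sub_ne_zero.mpr hx
      positivity
    · have : Tendsto (fun x => (x - x₀) * deriv f x - f x) (𝓝 x₀)
          (𝓝 ((x₀ - x₀) * deriv f x₀ - f x₀)) :=
        ((tendsto_id.sub_const x₀).mul hcf').sub hcf
      simp only [sub_self, zero_mul, hroot, sub_zero] at this
      exact this.mono_left nhdsWithin_le_nhds
    · have : Tendsto (fun x => (x - x₀) ^ 2) (𝓝 x₀) (𝓝 ((x₀ - x₀) ^ 2)) :=
        (tendsto_id.sub_const x₀).pow 2
      simp only [sub_self, ne_eq, OfNat.ofNat_ne_zero, not_false_eq_true, zero_pow] at this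
      exact this.mono_left nhdsWithin_le_nhds
    · have hbase : Tendsto (fun x => deriv (deriv f) x / 2) (𝓝[≠] x₀)
          (𝓝 (deriv (deriv f) x₀ / 2)) :=
        (hcf''.tendsto.div_const 2).mono_left nhdsWithin_le_nhds
      refine hbase.congr' ?_
      filter_upwards [self_mem_nhdsWithin] with x hx
      simp only [mem_compl_iff, mem_singleton_iff] at hx
      have hx' : x - x₀ ≠ 0 := sub_ne_zero.mpr hx
      field_simp
  -- the Newton map tends to x₀
  have hy : Tendsto (fun x => x - f x / deriv f x) (𝓝 x₀) (𝓝 x₀) := by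
    have : Tendsto (fun x => x - f x / deriv f x) (𝓝 x₀) (𝓝 (x₀ - f x₀ / deriv f x₀)) :=
      tendsto_id.sub (hcf.tendsto.div hcf'.tendsto hder)
    simpa [hroot] using this
  have hhy : Tendsto (fun x => h (x - f x / deriv f x)) (𝓝 x₀) (𝓝 (deriv f x₀)) :=
    hslope.comp hy
  -- eventual nonvanishing
  have hEv : ∀ᶠ x in 𝓝[≠] x₀, h x ≠ 0 ∧ deriv f x ≠ 0 ∧ x ≠ x₀ := by
    have e1 : ∀ᶠ x in 𝓝 x₀, h x ≠ 0 := hslope.eventually_ne hder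
    have e2 : ∀ᶠ x in 𝓝 x₀, deriv f x ≠ 0 := hcf'.tendsto.eventually_ne hder
    filter_upwards [nhdsWithin_le_nhds e1, nhdsWithin_le_nhds e2, self_mem_nhdsWithin] with
      x h1 h2 h3
    exact ⟨h1, h2, h3⟩
  -- main limit computation
  have hmain : Tendsto
      (fun x : ℝ => (h (x - f x / deriv f x) / h x) *
        (((x - x₀) * deriv f x - f x) / (x - x₀) ^ 2) * (deriv f x)⁻¹)
      (𝓝[≠] x₀)
      (𝓝 ((deriv f x₀ / deriv f x₀) * (deriv (deriv f) x₀ / 2) * (deriv f x₀)⁻¹)) := by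
    exact (((hhy.mono_left nhdsWithin_le_nhds).div
      (hslope.mono_left nhdsWithin_le_nhds) hder).mul hlh).mul
      ((hcf'.tendsto.mono_left nhdsWithin_le_nhds).inv₀ hder)
  have hval : (deriv f x₀ / deriv f x₀) * (deriv (deriv f) x₀ / 2) * (deriv f x₀)⁻¹ =
      iteratedDeriv 2 f x₀ / (2 * deriv f x₀) := by
    have : iteratedDeriv 2 f x₀ = deriv (deriv f) x₀ := by
      simp [iteratedDeriv_succ, iteratedDeriv_one]
    rw [this]
    field_simp
  rw [← hval]
  refine hmain.congr' ?_
  filter_upwards [hEv] with x hx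
  obtain ⟨hhx, hdx, hxx⟩ := hx
  have he : x - x₀ ≠ 0 := sub_ne_zero.mpr hxx
  have hfx : f x = h x * (x - x₀) := hfact x
  set yv := x - f x / deriv f x with hyv
  have hyx : yv - x₀ = (x - x₀) - h x * (x - x₀) / deriv f x := by
    rw [hyv, hfx]; ring
  have hfy : f yv = h yv * ((x - x₀) - h x * (x - x₀) / deriv f x) := by
    rw [hfact yv, hyx]
  rw [hfy, hfx]
  generalize h yv = A
  field_simp
end

section
/- Let f : ℝ → ℝ be three times continuously differentiable on an open interval D and let x* ∈ D be a simple zero of f. Define, for x near x*, y = x - f(x)/f'(x) and z = x - f(x)²/((f(x) - f(y))·f'(x)). Then there exist C > 0 and a neighborhood U of x* such that |z - x*| ≤ C·|x - x*|³ for all x ∈ U where z is defined (i.e., f'(x) ≠ 0 and f(x) ≠ f(y)). -/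
open Set Metric

/-- MVT lower bound on a convex set, ordered case. -/
lemma aux_lower_mvt_lt {h h' : ℝ → ℝ} {s : Set ℝ} (hs : Convex ℝ s)
    (hd : ∀ u ∈ s, HasDerivAt h (h' u) u) {m : ℝ}
    (hm : ∀ u ∈ s, m ≤ |h' u|) {x y : ℝ} (hx : x ∈ s) (hy : y ∈ s) (hlt : x < y) :
    m * |x - y| ≤ |h x - h y| := by
  have hsub : Set.Icc x y ⊆ s := hs.ordConnected.out hx hy
  obtain ⟨c, hc, hceq⟩ := exists_hasDerivAt_eq_slope h h' hlt
    (fun u hu => (hd u (hsub hu)).continuousAt.continuousWithinAt)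
    (fun u hu => hd u (hsub (Set.Ioo_subset_Icc_self hu)))
  have hmc := hm c (hsub (Set.Ioo_subset_Icc_self hc))
  have hyx : (0:ℝ) < y - x := sub_pos.2 hlt
  have h1 : h y - h x = h' c * (y - x) := by rw [hceq]; field_simp
  have h2 : |h x - h y| = |h' c| * (y - x) := by
    rw [abs_sub_comm, h1, abs_mul, abs_of_pos hyx]
  have h3 : |x - y| = y - x := by rw [abs_sub_comm, abs_of_pos hyx]
  rw [h2, h3]
  exact mul_le_mul_of_nonneg_right hmc hyx.le

/-- MVT lower bound on a convex set. -/
lemma aux_lower_mvt {h h' : ℝ → ℝ} {s : Set ℝ} (hs : Convex ℝ s)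
    (hd : ∀ u ∈ s, HasDerivAt h (h' u) u) {m : ℝ}
    (hm : ∀ u ∈ s, m ≤ |h' u|) {x y : ℝ} (hx : x ∈ s) (hy : y ∈ s) :
    m * |x - y| ≤ |h x - h y| := by
  rcases lt_trichotomy x y with hlt | heq | hgt
  · exact aux_lower_mvt_lt hs hd hm hx hy hlt
  · simp [heq]
  · have := aux_lower_mvt_lt hs hd hm hy hx hgt
    rwa [abs_sub_comm, abs_sub_comm (h y)] at this

set_option maxHeartbeats 1000000 in
theorem stmt13 (D : Set ℝ) (hD : IsOpen D) (hDconn : D.OrdConnected)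
    (f : ℝ → ℝ) (hf : ContDiffOn ℝ 3 f D)
    (x₀ : ℝ) (hx₀ : x₀ ∈ D) (hroot : f x₀ = 0) (hder : deriv f x₀ ≠ 0) :
    ∃ C > 0, ∃ U ∈ nhds x₀, ∀ x ∈ U,
      deriv f x ≠ 0 → f x ≠ f (x - f x / deriv f x) →
      |(x - (f x)^2 / ((f x - f (x - f x / deriv f x)) * deriv f x)) - x₀|
        ≤ C * |x - x₀|^3 := by
  set f1 := deriv f with hf1def
  set f2 := deriv f1 with hf2def
  set f3 := deriv f2 with hf3def
  have hC1 : ContDiffOn ℝ 2 f1 D := hf.deriv_of_isOpen hD (by norm_num)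
  have hC2 : ContDiffOn ℝ 1 f2 D := hC1.deriv_of_isOpen hD (by norm_num)
  have hC3 : ContinuousOn f3 D := hC2.continuousOn_deriv_of_isOpen hD (by norm_num)
  have hdf : ∀ u ∈ D, HasDerivAt f (f1 u) u := fun u hu =>
    ((hf.differentiableOn (by norm_num) u hu).differentiableAt (hD.mem_nhds hu)).hasDerivAt
  have hdf1 : ∀ u ∈ D, HasDerivAt f1 (f2 u) u := fun u hu =>
    ((hC1.differentiableOn (by norm_num) u hu).differentiableAt (hD.mem_nhds hu)).hasDerivAt
  have hdf2 : ∀ u ∈ D, HasDerivAt f2 (f3 u) u := fun u hu =>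
    ((hC2.differentiableOn (by norm_num) u hu).differentiableAt (hD.mem_nhds hu)).hasDerivAt
  set a := f1 x₀ with ha
  set b := f2 x₀ / 2 with hb
  set m := |a| / 2 with hmdef
  have hm : 0 < m := by
    have : 0 < |a| := abs_pos.2 hder
    positivity
  have hma : |a| = 2 * m := by rw [hmdef]; ring
  -- choose r
  have hnV : {u | |f1 u - a| < m} ∈ nhds x₀ := by
    have hcont : ContinuousAt f1 x₀ := hC1.continuousOn.continuousAt (hD.mem_nhds hx₀)
    have hcont2 : ContinuousAt (fun u => |f1 u - a|) x₀ := (hcont.sub continuousAt_const).abs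
    have h0 : |f1 x₀ - a| < m := by simp [← ha, hm]
    exact hcont2.eventually_lt continuousAt_const h0
  obtain ⟨r, hr0, hrsub⟩ := (Metric.nhds_basis_closedBall.mem_iff).1
    (Filter.inter_mem hnV (hD.mem_nhds hx₀))
  set B := Metric.closedBall x₀ r with hBdef
  have hBD : B ⊆ D := fun u hu => (hrsub hu).2
  have hx₀B : x₀ ∈ B := Metric.mem_closedBall_self hr0.le
  have hBconv : Convex ℝ B := convex_closedBall _ _
  have hBf1 : ∀ u ∈ B, m ≤ |f1 u| := by
    intro u hu
    have h1 : |f1 u - a| < m := (hrsub hu).1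
    have h2 : |a| - |f1 u - a| ≤ |f1 u| := by
      have h3 := abs_sub_abs_le_abs_sub a (f1 u)
      rw [abs_sub_comm] at h3
      linarith
    linarith [hma ▸ h2]
  have hcpt : IsCompact B := isCompact_closedBall x₀ r
  obtain ⟨M1, hM1⟩ := hcpt.exists_bound_of_continuousOn (hC1.continuousOn.mono hBD)
  obtain ⟨M2, hM2⟩ := hcpt.exists_bound_of_continuousOn (hC2.continuousOn.mono hBD)
  obtain ⟨M3, hM3⟩ := hcpt.exists_bound_of_continuousOn (hC3.mono hBD)
  set M := max 1 (max M1 (max M2 M3)) with hMdef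
  have hM : (1:ℝ) ≤ M := le_max_left _ _
  have hM0 : (0:ℝ) < M := lt_of_lt_of_le one_pos hM
  have hMf1 : ∀ u ∈ B, |f1 u| ≤ M := fun u hu =>
    le_trans (by simpa [Real.norm_eq_abs] using hM1 u hu)
      (le_trans (le_max_left _ _) (le_max_right _ _))
  have hMf2 : ∀ u ∈ B, |f2 u| ≤ M := fun u hu =>
    le_trans (by simpa [Real.norm_eq_abs] using hM2 u hu)
      (le_trans (le_trans (le_max_left _ _) (le_max_right _ _)) (le_max_right _ _))
  have hMf3 : ∀ u ∈ B, |f3 u| ≤ M := fun u hu =>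
    le_trans (by simpa [Real.norm_eq_abs] using hM3 u hu)
      (le_trans (le_trans (le_max_right _ _) (le_max_right _ _)) (le_max_right _ _))
  have hbM : |b| ≤ M := by
    have := hMf2 x₀ hx₀B
    rw [hb, abs_div]
    simp only [abs_two]
    linarith [abs_nonneg (f2 x₀)]
  -- Taylor-type estimates
  have E_f2 : ∀ t ∈ B, |f2 t - f2 x₀| ≤ M * |t - x₀| := by
    intro t ht
    have := hBconv.norm_image_sub_le_of_norm_hasDerivWithin_le
      (f := f2) (f' := f3)
      (fun u hu => (hdf2 u (hBD hu)).hasDerivWithinAt)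
      (fun u hu => by simpa [Real.norm_eq_abs] using hMf3 u hu)
      hx₀B ht
    simpa [Real.norm_eq_abs] using this
  have E_f1 : ∀ t ∈ B, |f1 t - a| ≤ M * |t - x₀| := by
    intro t ht
    have := hBconv.norm_image_sub_le_of_norm_hasDerivWithin_le
      (f := f1) (f' := f2)
      (fun u hu => (hdf1 u (hBD hu)).hasDerivWithinAt)
      (fun u hu => by simpa [Real.norm_eq_abs] using hMf2 u hu)
      hx₀B ht
    rw [ha]
    simpa [Real.norm_eq_abs] using this
  have E_g1 : ∀ t ∈ B, |f1 t - a - 2*b*(t - x₀)| ≤ M * |t - x₀|^2 := by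
    intro t ht
    have hsB : Set.uIcc x₀ t ⊆ B := hBconv.ordConnected.uIcc_subset hx₀B ht
    have key := (convex_uIcc x₀ t).norm_image_sub_le_of_norm_hasDerivWithin_le
      (f := fun u => f1 u - a - 2*b*(u - x₀)) (f' := fun u => f2 u - f2 x₀)
      (fun u hu => by
        have h1 := hdf1 u (hBD (hsB hu))
        have h2 : HasDerivAt (fun u : ℝ => 2*b*(u - x₀)) (2*b) u := by
          simpa using ((hasDerivAt_id u).sub_const x₀).const_mul (2*b)
        have h3 : HasDerivAt (fun u => f1 u - a - 2*b*(u - x₀)) (f2 u - 2*b) u :=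
          (h1.sub_const a).sub h2
        have hbb : f2 u - 2*b = f2 u - f2 x₀ := by rw [hb]; ring
        exact (hbb ▸ h3).hasDerivWithinAt)
      (C := M * |t - x₀|)
      (fun u hu => by
        have h4 : |u - x₀| ≤ |t - x₀| := abs_sub_left_of_mem_uIcc hu
        have h5 := E_f2 u (hsB hu)
        have : |f2 u - f2 x₀| ≤ M * |t - x₀| := by nlinarith [abs_nonneg (u - x₀), hM]
        simpa [Real.norm_eq_abs] using this)
      (Set.left_mem_uIcc) (Set.right_mem_uIcc)
    have hz0 : f1 x₀ - a = 0 := by rw [ha]; ring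
    have key' : |f1 t - a - 2*b*(t - x₀)| ≤ M * |t - x₀| * |t - x₀| := by
      simpa [Real.norm_eq_abs, hz0] using key
    calc |f1 t - a - 2*b*(t - x₀)| ≤ M * |t - x₀| * |t - x₀| := key'
      _ = M * |t - x₀|^2 := by ring
  have E_g : ∀ t ∈ B, |f t - a*(t - x₀) - b*(t - x₀)^2| ≤ M * |t - x₀|^3 := by
    intro t ht
    have hsB : Set.uIcc x₀ t ⊆ B := hBconv.ordConnected.uIcc_subset hx₀B ht
    have key := (convex_uIcc x₀ t).norm_image_sub_le_of_norm_hasDerivWithin_le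
      (f := fun u => f u - a*(u - x₀) - b*(u - x₀)^2)
      (f' := fun u => f1 u - a - 2*b*(u - x₀))
      (fun u hu => by
        have h1 := hdf u (hBD (hsB hu))
        have h2 : HasDerivAt (fun u : ℝ => a*(u - x₀)) a u := by
          simpa using ((hasDerivAt_id u).sub_const x₀).const_mul a
        have h3 : HasDerivAt (fun u : ℝ => b*(u - x₀)^2) (b*(2*(u - x₀))) u := by
          simpa using (((hasDerivAt_id u).sub_const x₀).pow 2).const_mul b
        have h4 : HasDerivAt (fun u => f u - a*(u - x₀) - b*(u - x₀)^2)
            (f1 u - a - b*(2*(u - x₀))) u := (h1.sub h2).sub h3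
        have hbb : f1 u - a - b*(2*(u-x₀)) = f1 u - a - 2*b*(u - x₀) := by ring
        exact (hbb ▸ h4).hasDerivWithinAt)
      (C := M * |t - x₀|^2)
      (fun u hu => by
        have h4 : |u - x₀| ≤ |t - x₀| := abs_sub_left_of_mem_uIcc hu
        have h5 := E_g1 u (hsB hu)
        have h6 : |u - x₀|^2 ≤ |t - x₀|^2 := pow_le_pow_left₀ (abs_nonneg _) h4 2
        have : |f1 u - a - 2*b*(u - x₀)| ≤ M * |t - x₀|^2 := by nlinarith [hM]
        simpa [Real.norm_eq_abs] using this)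
      (Set.left_mem_uIcc) (Set.right_mem_uIcc)
    have key' : |f t - a*(t - x₀) - b*(t - x₀)^2 - f x₀| ≤ M * |t - x₀|^2 * |t - x₀| := by
      simpa [Real.norm_eq_abs] using key
    rw [hroot, sub_zero] at key'
    calc |f t - a*(t - x₀) - b*(t - x₀)^2| ≤ M * |t - x₀|^2 * |t - x₀| := key'
      _ = M * |t - x₀|^3 := by ring
  have E_low : ∀ p ∈ B, ∀ q ∈ B, m * |p - q| ≤ |f p - f q| := fun p hp q hq =>
    aux_lower_mvt hBconv (fun u hu => hdf u (hBD hu)) hBf1 hp hq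
  -- constants
  set K := (2*M + M*r)/m with hKdef
  have hK : 0 < K := by
    apply div_pos _ hm
    nlinarith
  set c0 := M*K*m + M^2*K*r + M^2*K^3*r^3 with hc0
  have hc0pos : 0 < c0 := by
    have h1 : 0 < M*K*m := mul_pos (mul_pos hM0 hK) hm
    have h2 : 0 < M^2*K*r := mul_pos (mul_pos (pow_pos hM0 2) hK) hr0
    have h3 : 0 < M^2*K^3*r^3 := mul_pos (mul_pos (pow_pos hM0 2) (pow_pos hK 3)) (pow_pos hr0 3)
    rw [hc0]; linarith
  set C := c0/m^2 with hCdef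
  have hC : 0 < C := div_pos hc0pos (pow_pos hm 2)
  set r' := min r (1/K) with hr'def
  have hr'0 : 0 < r' := lt_min hr0 (by positivity)
  refine ⟨C, hC, Metric.ball x₀ r', Metric.ball_mem_nhds _ hr'0, ?_⟩
  intro x hxU hfx hfxy
  have hxx0 : x ≠ x₀ := by
    intro h
    subst h
    exact hfxy (by simp [hroot])
  set Y := x - f x / f1 x with hYdef
  set e := |x - x₀| with he_def
  have he : 0 < e := by rw [he_def]; exact abs_pos.2 (sub_ne_zero.2 hxx0)
  have hxr' : e < r' := by
    rw [he_def]
    simpa [Real.dist_eq] using hxU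
  have her : e ≤ r := le_trans hxr'.le (min_le_left _ _)
  have heK : K * e ≤ 1 := by
    have h1 : e < 1/K := lt_of_lt_of_le hxr' (min_le_right _ _)
    rw [lt_div_iff₀ hK] at h1
    nlinarith
  have hxB : x ∈ B := by
    rw [hBdef]
    simp only [Metric.mem_closedBall, Real.dist_eq]
    rw [he_def] at her
    exact her
  have hfxM : |f1 x| ≤ M := hMf1 x hxB
  have hfxm : m ≤ |f1 x| := hBf1 x hxB
  have hfxlow : m * e ≤ |f x| := by
    rw [he_def]
    have := E_low x hxB x₀ hx₀B
    simpa [hroot] using this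
  have hfx0 : f x ≠ 0 := by
    intro h
    rw [h] at hfxlow
    simp only [abs_zero] at hfxlow
    nlinarith
  -- Newton quadratic estimate
  have hnum : |f1 x * (x - x₀) - f x| ≤ (2*M + M*r) * e^2 := by
    have h2 := E_f1 x hxB
    rw [← he_def] at h2
    have h4 := E_g x hxB
    rw [← he_def] at h4
    have h5 : |b*(x-x₀)^2| ≤ M * e^2 := by
      rw [abs_mul, abs_pow, ← he_def]
      nlinarith [abs_nonneg b, sq_nonneg e]
    have h6 : |f x - a*(x-x₀)| ≤ M*e^3 + M*e^2 := by
      have hid : f x - a*(x-x₀) = (f x - a*(x-x₀) - b*(x-x₀)^2) + b*(x-x₀)^2 := by ring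
      calc |f x - a*(x-x₀)| = |(f x - a*(x-x₀) - b*(x-x₀)^2) + b*(x-x₀)^2| := by rw [← hid]
        _ ≤ |f x - a*(x-x₀) - b*(x-x₀)^2| + |b*(x-x₀)^2| := abs_add_le _ _
        _ ≤ M*e^3 + M*e^2 := add_le_add h4 h5
    have h7 : M*e^3 ≤ M*r*e^2 := by
      have := mul_le_mul_of_nonneg_left her (mul_nonneg hM0.le (sq_nonneg e))
      nlinarith
    have h1 : f1 x * (x - x₀) - f x = (f1 x - a)*(x - x₀) - (f x - a*(x - x₀)) := by ring
    calc |f1 x*(x-x₀) - f x| = |(f1 x - a)*(x-x₀) - (f x - a*(x-x₀))| := by rw [h1]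
      _ ≤ |(f1 x - a)*(x-x₀)| + |f x - a*(x-x₀)| := abs_sub _ _
      _ ≤ M*e*e + (M*e^3 + M*e^2) := by
          refine add_le_add ?_ h6
          rw [abs_mul, ← he_def]
          exact mul_le_mul_of_nonneg_right h2 he.le
      _ ≤ (2*M + M*r)*e^2 := by nlinarith
  have hYid : Y - x₀ = (f1 x*(x - x₀) - f x)/f1 x := by
    rw [hYdef, eq_div_iff hfx, sub_mul, sub_mul, div_mul_cancel₀ _ hfx]
    ring
  have hey : |Y - x₀| ≤ K * e^2 := by
    rw [hYid, abs_div]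
    have hnn : (0:ℝ) ≤ (2*M + M*r)*e^2 :=
      mul_nonneg (by nlinarith [mul_pos hM0 hr0]) (sq_nonneg e)
    calc |f1 x*(x-x₀) - f x| / |f1 x| ≤ ((2*M + M*r)*e^2)/m :=
          div_le_div₀ hnn hnum hm hfxm
      _ = K*e^2 := by rw [hKdef]; ring
  have heye : |Y - x₀| ≤ e := by
    nlinarith [mul_le_mul_of_nonneg_right heK he.le]
  have hYB : Y ∈ B := by
    rw [hBdef]
    simp only [Metric.mem_closedBall, Real.dist_eq]
    rw [he_def] at heye her
    linarith
  have hxYid : x - Y = f x / f1 x := by rw [hYdef]; ring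
  have hxY : x ≠ Y := by
    intro hcontr
    apply hfx0
    have hz' : x - Y = 0 := by rw [← hcontr]; ring
    rw [hxYid] at hz'
    exact (div_eq_zero_iff.1 hz').resolve_right hfx
  set d := |x - Y| with hd_def
  have hd0 : 0 < d := by rw [hd_def]; exact abs_pos.2 (sub_ne_zero.2 hxY)
  have hmed : m*e ≤ M*d := by
    have h1 : |f x| = d * |f1 x| := by
      rw [hd_def, hxYid, abs_div, div_mul_cancel₀ _ (abs_ne_zero.2 hfx)]
    calc m*e ≤ |f x| := hfxlow
      _ = d*|f1 x| := h1
      _ ≤ d*M := mul_le_mul_of_nonneg_left hfxM hd0.le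
      _ = M*d := mul_comm _ _
  have hden0 : f x - f Y ≠ 0 := sub_ne_zero.2 hfxy
  have hden : m*d ≤ |f x - f Y| := by
    rw [hd_def]
    exact E_low x hxB Y hYB
  have habs : 0 < |f x - f Y| := lt_of_lt_of_le (mul_pos hm hd0) hden
  set N := (Y - x₀)*f x - (x - x₀)*f Y with hN_def
  have hz : x - (f x)^2/((f x - f Y)*f1 x) - x₀ = N/(f x - f Y) := by
    have h1 : f x = (x - Y)*f1 x := by
      rw [hxYid, div_mul_cancel₀ _ hfx]
    have h2 : (f x)^2 = f x * ((x - Y)*f1 x) := by rw [pow_two, ← h1]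
    rw [hN_def, h2]
    field_simp
    ring
  -- numerator bound
  have hgx := E_g x hxB
  rw [← he_def] at hgx
  have hgY := E_g Y hYB
  have hKe2 : (0:ℝ) ≤ K*e^2 := mul_nonneg hK.le (sq_nonneg e)
  have hgY3 : |f Y - a*(Y - x₀) - b*(Y - x₀)^2| ≤ M*(K*e^2)^3 := by
    have h8 : |Y - x₀|^3 ≤ (K*e^2)^3 := pow_le_pow_left₀ (abs_nonneg _) hey 3
    calc |f Y - a*(Y - x₀) - b*(Y - x₀)^2| ≤ M * |Y - x₀|^3 := hgY
      _ ≤ M*(K*e^2)^3 := mul_le_mul_of_nonneg_left h8 hM0.le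
  set p1 := b*(x-x₀)*(Y-x₀)*(x-Y) with hp1
  set p2 := (Y-x₀)*(f x - a*(x-x₀) - b*(x-x₀)^2) with hp2
  set p3 := (x-x₀)*(f Y - a*(Y-x₀) - b*(Y-x₀)^2) with hp3
  have hA : |p1| ≤ M*e*(K*e^2)*d := by
    rw [hp1, abs_mul, abs_mul, abs_mul, ← he_def, ← hd_def]
    have s1 : |b| * e ≤ M*e := mul_le_mul_of_nonneg_right hbM he.le
    have s2 : |b| * e * |Y-x₀| ≤ M*e*(K*e^2) :=
      mul_le_mul s1 hey (abs_nonneg _) (by positivity)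
    exact mul_le_mul_of_nonneg_right s2 (hd_def ▸ hd0.le)
  have hB2 : |p2| ≤ (K*e^2)*(M*e^3) := by
    rw [hp2, abs_mul]
    exact mul_le_mul hey hgx (abs_nonneg _) hKe2
  have hC2 : |p3| ≤ e*(M*(K*e^2)^3) := by
    rw [hp3, abs_mul, ← he_def]
    exact mul_le_mul_of_nonneg_left hgY3 he.le
  have hNb : |N| ≤ M*e*(K*e^2)*d + (K*e^2)*(M*e^3) + e*(M*(K*e^2)^3) := by
    have hNid : N = (p1 + p2) - p3 := by rw [hN_def, hp1, hp2, hp3]; ring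
    calc |N| = |(p1 + p2) - p3| := by rw [← hNid]
      _ ≤ |p1 + p2| + |p3| := abs_sub _ _
      _ ≤ (|p1| + |p2|) + |p3| := by linarith [abs_add_le p1 p2]
      _ ≤ M*e*(K*e^2)*d + (K*e^2)*(M*e^3) + e*(M*(K*e^2)^3) := by linarith
  -- final assembly
  rw [hz, abs_div]
  rw [div_le_iff₀ habs]
  have key2 : m*(M*e*(K*e^2)*d + (K*e^2)*(M*e^3) + e*(M*(K*e^2)^3)) ≤ c0*(e^3*d) := by
    have hMd : (0:ℝ) ≤ M*d := mul_nonneg hM0.le hd0.le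
    have hmee : (m*e)*e ≤ (M*d)*r := mul_le_mul hmed her he.le hMd
    have he3 : e^3 ≤ r^3 := pow_le_pow_left₀ he.le her 3
    have hmee3 : (m*e)*e^3 ≤ (M*d)*r^3 := mul_le_mul hmed he3 (pow_nonneg he.le 3) hMd
    have t1 : m*(M*e*(K*e^2)*d) = M*K*m*(e^3*d) := by ring
    have t2 : m*((K*e^2)*(M*e^3)) ≤ M^2*K*r*(e^3*d) := by
      calc m*((K*e^2)*(M*e^3)) = (K*M*e^3)*((m*e)*e) := by ring
        _ ≤ (K*M*e^3)*((M*d)*r) := mul_le_mul_of_nonneg_left hmee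
            (mul_nonneg (mul_nonneg hK.le hM0.le) (pow_nonneg he.le 3))
        _ = M^2*K*r*(e^3*d) := by ring
    have t3 : m*(e*(M*(K*e^2)^3)) ≤ M^2*K^3*r^3*(e^3*d) := by
      calc m*(e*(M*(K*e^2)^3)) = (M*K^3*e^3)*((m*e)*e^3) := by ring
        _ ≤ (M*K^3*e^3)*((M*d)*r^3) := mul_le_mul_of_nonneg_left hmee3
            (mul_nonneg (mul_nonneg hM0.le (pow_nonneg hK.le 3)) (pow_nonneg he.le 3))
        _ = M^2*K^3*r^3*(e^3*d) := by ring
    calc m*(M*e*(K*e^2)*d + (K*e^2)*(M*e^3) + e*(M*(K*e^2)^3))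
        = m*(M*e*(K*e^2)*d) + m*((K*e^2)*(M*e^3)) + m*(e*(M*(K*e^2)^3)) := by ring
      _ ≤ M*K*m*(e^3*d) + M^2*K*r*(e^3*d) + M^2*K^3*r^3*(e^3*d) :=
          add_le_add (add_le_add (le_of_eq t1) t2) t3
      _ = (M*K*m + M^2*K*r + M^2*K^3*r^3)*(e^3*d) := by ring
      _ = c0*(e^3*d) := by rw [hc0]
  have hfinal : |N| ≤ C*e^3*(m*d) := by
    have hstep : M*e*(K*e^2)*d + (K*e^2)*(M*e^3) + e*(M*(K*e^2)^3) ≤ c0*(e^3*d)/m := by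
      rw [le_div_iff₀ hm]
      linarith [key2]
    have heq : C*e^3*(m*d) = c0*(e^3*d)/m := by
      rw [hCdef]
      field_simp
    rw [heq]
    exact le_trans hNb hstep
  calc |N| ≤ C*e^3*(m*d) := hfinal
    _ ≤ C*e^3*|f x - f Y| := mul_le_mul_of_nonneg_left hden (by positivity)
end

section
/- Let f : ℝ → ℝ be four times continuously differentiable on an open interval D, let x* ∈ D be a simple zero of f, and let φ : ℝ → ℝ be twice continuously differentiable with φ(0) = 0 and φ'(0) = -1/2. Define, for x near x*, y = x - f(x)/f'(x), z = x - f(x)²/((f(x)-f(y))·f'(x)), t = f(y)/f(x), and F(x) = z - [1 - (f(x)/(f(x)-f(y)))·(1 + f(y)/(f(x)-f(y)))]·(f(x)/f'(x))·φ(t). Then there exist C > 0 and a neighborhood U of x* such that |F(x) - x*| ≤ C·|x - x*|⁴ for all x ∈ U where F is defined. -/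
open Filter Asymptotics Metric Set Topology

-- MVT step lemma
lemma mvt_step {g h : ℝ → ℝ} {a r M : ℝ} {n : ℕ}
    (hdiff : ∀ x ∈ ball a r, HasDerivAt g (h x) x)
    (hb : ∀ x ∈ ball a r, ‖h x‖ ≤ M * ‖x - a‖ ^ n) (hga : g a = 0) (har : 0 < r) :
    ∀ x ∈ ball a r, ‖g x‖ ≤ (max M 0) * ‖x - a‖ ^ (n + 1) := by
  intro x hx
  have hseg : segment ℝ a x ⊆ ball a r :=
    (convex_ball a r).segment_subset (mem_ball_self har) hx
  have key : ∀ y ∈ segment ℝ a x, ‖y - a‖ ≤ ‖x - a‖ := by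
    intro y hy
    rw [segment_eq_image'] at hy
    obtain ⟨θ, hθ, rfl⟩ := hy
    simp only [add_sub_cancel_left, norm_smul]
    calc ‖θ‖ * ‖x - a‖ ≤ 1 * ‖x - a‖ := by
          apply mul_le_mul_of_nonneg_right _ (norm_nonneg _)
          rw [Real.norm_eq_abs, abs_le]; constructor <;> linarith [hθ.1, hθ.2]
      _ = ‖x - a‖ := one_mul _
  have hC : ∀ y ∈ segment ℝ a x, ‖h y‖ ≤ (max M 0) * ‖x - a‖ ^ n := by
    intro y hy
    calc ‖h y‖ ≤ M * ‖y - a‖ ^ n := hb y (hseg hy)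
      _ ≤ (max M 0) * ‖x - a‖ ^ n := by
          apply mul_le_mul (le_max_left M 0) (pow_le_pow_left₀ (norm_nonneg _) (key y hy) n)
            (pow_nonneg (norm_nonneg _) n) (le_max_right M 0)
  have := (convex_segment a x).norm_image_sub_le_of_norm_hasDerivWithin_le
    (fun y hy => (hdiff y (hseg hy)).hasDerivWithinAt) hC (left_mem_segment ℝ a x)
    (right_mem_segment ℝ a x)
  rw [hga, sub_zero] at this
  calc ‖g x‖ ≤ (max M 0) * ‖x - a‖ ^ n * ‖x - a‖ := this
    _ = (max M 0) * ‖x - a‖ ^ (n + 1) := by ring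

-- division by (x - x₀) over punctured nhds
lemma divE {x₀ : ℝ} {p : ℝ → ℝ} {k : ℕ} (h : p =O[𝓝[≠] x₀] fun x => (x - x₀) ^ (k + 1)) :
    (fun x => p x / (x - x₀)) =O[𝓝[≠] x₀] fun x => (x - x₀) ^ k := by
  rw [isBigO_iff] at h ⊢
  obtain ⟨c, hc⟩ := h
  refine ⟨c, ?_⟩
  filter_upwards [hc, self_mem_nhdsWithin] with x hx hne
  have hne' : x - x₀ ≠ 0 := sub_ne_zero.2 hne
  have habs : |x - x₀| ≠ 0 := abs_ne_zero.2 hne'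
  simp only [Real.norm_eq_abs, abs_div, abs_pow] at *
  rw [pow_succ] at hx
  rw [div_le_iff₀ (abs_pos.2 hne')]
  linarith [hx]

lemma taylorS1 {g : ℝ → ℝ} {a δ : ℝ} (hδ : 0 < δ) (hg : ContDiffOn ℝ 1 g (ball a δ)) :
    ∃ r, 0 < r ∧ r ≤ δ ∧ ∃ M, ∀ x ∈ ball a r,
      ‖g x - g a‖ ≤ M * ‖x - a‖ ^ 1 := by
  have hcont : ContinuousOn (deriv g) (ball a δ) :=
    hg.continuousOn_deriv_of_isOpen isOpen_ball le_rfl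
  have hca : ContinuousAt (deriv g) a :=
    hcont.continuousAt (isOpen_ball.mem_nhds (mem_ball_self hδ))
  have hev : ∀ᶠ x in 𝓝 a, ‖deriv g x‖ < ‖deriv g a‖ + 1 := by
    have := hca.norm.tendsto
    exact this.eventually_lt_const (by linarith [norm_nonneg (deriv g a)])
  obtain ⟨r', hr', hball⟩ := Metric.eventually_nhds_iff_ball.1 hev
  refine ⟨min r' δ, lt_min hr' hδ, min_le_right _ _, max (‖deriv g a‖ + 1) 0, ?_⟩
  have hsub : ball a (min r' δ) ⊆ ball a δ := ball_subset_ball (min_le_right _ _)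
  have hsub' : ball a (min r' δ) ⊆ ball a r' := ball_subset_ball (min_le_left _ _)
  have := mvt_step (g := fun x => g x - g a) (h := deriv g) (a := a) (r := min r' δ)
    (M := ‖deriv g a‖ + 1) (n := 0)
    (fun x hx => by
      have : DifferentiableAt ℝ g x :=
        (hg.differentiableOn (by norm_num)).differentiableAt (isOpen_ball.mem_nhds (hsub hx))
      simpa using this.hasDerivAt.sub_const (g a))
    (fun x hx => by simpa using (hball x (hsub' hx)).le)
    (by simp) (lt_min hr' hδ)
  simpa using this

lemma taylorS2 {g : ℝ → ℝ} {a δ : ℝ} (hδ : 0 < δ) (hg : ContDiffOn ℝ 2 g (ball a δ)) :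
    ∃ r, 0 < r ∧ r ≤ δ ∧ ∃ M, ∀ x ∈ ball a r,
      ‖g x - g a - deriv g a * (x - a)‖ ≤ M * ‖x - a‖ ^ 2 := by
  have hg1 : ContDiffOn ℝ 1 (deriv g) (ball a δ) :=
    hg.deriv_of_isOpen isOpen_ball (by norm_num)
  obtain ⟨r, hr, hrδ, M, hM⟩ := taylorS1 hδ hg1
  refine ⟨r, hr, hrδ, max M 0, ?_⟩
  have hsub : ball a r ⊆ ball a δ := ball_subset_ball hrδ
  exact mvt_step (g := fun x => g x - g a - deriv g a * (x - a))
    (h := fun x => deriv g x - deriv g a) (n := 1)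
    (fun x hx => by
      have hd : DifferentiableAt ℝ g x :=
        (hg.differentiableOn (by norm_num)).differentiableAt
          (isOpen_ball.mem_nhds (hsub hx))
      have h2 : HasDerivAt (fun y => deriv g a * (y - a)) (deriv g a) x := by
        simpa using ((hasDerivAt_id x).sub_const a).const_mul (deriv g a)
      exact (hd.hasDerivAt.sub_const (g a)).sub h2)
    hM (by simp) hr

lemma taylorS3 {g : ℝ → ℝ} {a δ : ℝ} (hδ : 0 < δ) (hg : ContDiffOn ℝ 3 g (ball a δ)) :
    ∃ r, 0 < r ∧ r ≤ δ ∧ ∃ M, ∀ x ∈ ball a r,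
      ‖g x - g a - deriv g a * (x - a) - deriv (deriv g) a / 2 * (x - a) ^ 2‖
        ≤ M * ‖x - a‖ ^ 3 := by
  have hg2 : ContDiffOn ℝ 2 (deriv g) (ball a δ) :=
    hg.deriv_of_isOpen isOpen_ball (by norm_num)
  obtain ⟨r, hr, hrδ, M, hM⟩ := taylorS2 hδ hg2
  refine ⟨r, hr, hrδ, max M 0, ?_⟩
  have hsub : ball a r ⊆ ball a δ := ball_subset_ball hrδ
  exact mvt_step (g := fun x => g x - g a - deriv g a * (x - a)
      - deriv (deriv g) a / 2 * (x - a) ^ 2)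
    (h := fun x => deriv g x - deriv g a - deriv (deriv g) a * (x - a)) (n := 2)
    (fun x hx => by
      have hd : DifferentiableAt ℝ g x :=
        (hg.differentiableOn (by norm_num)).differentiableAt
          (isOpen_ball.mem_nhds (hsub hx))
      have h2 : HasDerivAt (fun y => deriv g a * (y - a)) (deriv g a) x := by
        simpa using ((hasDerivAt_id x).sub_const a).const_mul (deriv g a)
      have h3 : HasDerivAt (fun y => deriv (deriv g) a / 2 * (y - a) ^ 2)
          (deriv (deriv g) a * (x - a)) x := by
        have := (((hasDerivAt_id x).sub_const a).pow 2).const_mul (deriv (deriv g) a / 2)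
        exact this.congr_deriv (by simp; ring)
      exact ((hd.hasDerivAt.sub_const (g a)).sub h2).sub h3)
    hM (by simp) hr

lemma taylorS4 {g : ℝ → ℝ} {a δ : ℝ} (hδ : 0 < δ) (hg : ContDiffOn ℝ 4 g (ball a δ)) :
    ∃ r, 0 < r ∧ r ≤ δ ∧ ∃ M, ∀ x ∈ ball a r,
      ‖g x - g a - deriv g a * (x - a) - deriv (deriv g) a / 2 * (x - a) ^ 2
        - deriv (deriv (deriv g)) a / 6 * (x - a) ^ 3‖ ≤ M * ‖x - a‖ ^ 4 := by
  have hg3 : ContDiffOn ℝ 3 (deriv g) (ball a δ) :=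
    hg.deriv_of_isOpen isOpen_ball (by norm_num)
  obtain ⟨r, hr, hrδ, M, hM⟩ := taylorS3 hδ hg3
  refine ⟨r, hr, hrδ, max M 0, ?_⟩
  have hsub : ball a r ⊆ ball a δ := ball_subset_ball hrδ
  refine mvt_step (g := fun x => g x - g a - deriv g a * (x - a)
      - deriv (deriv g) a / 2 * (x - a) ^ 2 - deriv (deriv (deriv g)) a / 6 * (x - a) ^ 3)
    (h := fun x => deriv g x - deriv g a - deriv (deriv g) a * (x - a)
      - deriv (deriv (deriv g)) a / 2 * (x - a) ^ 2) (n := 3)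
    (fun x hx => by
      have hd : DifferentiableAt ℝ g x :=
        (hg.differentiableOn (by norm_num)).differentiableAt
          (isOpen_ball.mem_nhds (hsub hx))
      have h2 : HasDerivAt (fun y => deriv g a * (y - a)) (deriv g a) x := by
        simpa using ((hasDerivAt_id x).sub_const a).const_mul (deriv g a)
      have h3 : HasDerivAt (fun y => deriv (deriv g) a / 2 * (y - a) ^ 2)
          (deriv (deriv g) a * (x - a)) x := by
        have := (((hasDerivAt_id x).sub_const a).pow 2).const_mul (deriv (deriv g) a / 2)
        exact this.congr_deriv (by simp; ring)
      have h4 : HasDerivAt (fun y => deriv (deriv (deriv g)) a / 6 * (y - a) ^ 3)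
          (deriv (deriv (deriv g)) a / 2 * (x - a) ^ 2) x := by
        have := (((hasDerivAt_id x).sub_const a).pow 3).const_mul
          (deriv (deriv (deriv g)) a / 6)
        exact this.congr_deriv (by simp; ring)
      exact (((hd.hasDerivAt.sub_const (g a)).sub h2).sub h3).sub h4)
    hM (by simp) hr

set_option maxHeartbeats 4000000 in
theorem stmt14 (D : Set ℝ) (hD : IsOpen D) (hDconn : D.OrdConnected)
    (f : ℝ → ℝ) (hf : ContDiffOn ℝ 4 f D)
    (x₀ : ℝ) (hx₀ : x₀ ∈ D) (hroot : f x₀ = 0) (hder : deriv f x₀ ≠ 0)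
    (φ : ℝ → ℝ) (hφ : ContDiff ℝ 2 φ) (hφ0 : φ 0 = 0) (hφ'0 : deriv φ 0 = -1/2) :
    ∃ C > 0, ∃ U ∈ nhds x₀, ∀ x ∈ U,
      deriv f x ≠ 0 → f x ≠ 0 → f x ≠ f (x - f x / deriv f x) →
      (let y := x - f x / deriv f x
       let z := x - (f x)^2 / ((f x - f y) * deriv f x)
       let t := f y / f x
       let F := z - (1 - (f x / (f x - f y)) * (1 + f y / (f x - f y))) *
                  (f x / deriv f x) * φ t
       |F - x₀| ≤ C * |x - x₀|^4) := by
  obtain ⟨δ, hδpos, hδD⟩ := Metric.isOpen_iff.1 hD x₀ hx₀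
  have hfB : ContDiffOn ℝ 4 f (ball x₀ δ) := hf.mono hδD
  set c1 : ℝ := deriv f x₀ with hc1def
  set c2 : ℝ := deriv (deriv f) x₀ / 2 with hc2def
  set c3 : ℝ := deriv (deriv (deriv f)) x₀ / 6 with hc3def
  have hc1 : c1 ≠ 0 := hder
  set l : Filter ℝ := 𝓝[≠] x₀ with hldef
  have hl : l ≤ 𝓝 x₀ := nhdsWithin_le_nhds
  -- Taylor expansion of f
  have hr1 : (fun x => f x - (c1 * (x - x₀) + c2 * (x - x₀) ^ 2 + c3 * (x - x₀) ^ 3))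
      =O[𝓝 x₀] fun x => (x - x₀) ^ 4 := by
    obtain ⟨r, hr, _, M, hM⟩ := taylorS4 hδpos hfB
    rw [isBigO_iff]
    refine ⟨M, ?_⟩
    filter_upwards [ball_mem_nhds x₀ hr] with x hx
    have h := hM x hx
    have heq : f x - (c1 * (x - x₀) + c2 * (x - x₀) ^ 2 + c3 * (x - x₀) ^ 3)
        = f x - f x₀ - c1 * (x - x₀) - deriv (deriv f) x₀ / 2 * (x - x₀) ^ 2
          - deriv (deriv (deriv f)) x₀ / 6 * (x - x₀) ^ 3 := by
      rw [hroot, hc2def, hc3def]; ring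
    rw [heq]
    simpa [norm_pow] using h
  -- Taylor expansion of deriv f
  have hr2 : (fun x => deriv f x - (c1 + 2 * c2 * (x - x₀) + 3 * c3 * (x - x₀) ^ 2))
      =O[𝓝 x₀] fun x => (x - x₀) ^ 3 := by
    have hfB3 : ContDiffOn ℝ 3 (deriv f) (ball x₀ δ) :=
      hfB.deriv_of_isOpen isOpen_ball (by norm_num)
    obtain ⟨r, hr, _, M, hM⟩ := taylorS3 hδpos hfB3
    rw [isBigO_iff]
    refine ⟨M, ?_⟩
    filter_upwards [ball_mem_nhds x₀ hr] with x hx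
    have h := hM x hx
    have heq : deriv f x - (c1 + 2 * c2 * (x - x₀) + 3 * c3 * (x - x₀) ^ 2)
        = deriv f x - deriv f x₀ - deriv (deriv f) x₀ * (x - x₀)
          - deriv (deriv (deriv f)) x₀ / 2 * (x - x₀) ^ 2 := by
      rw [hc1def, hc2def, hc3def]; ring
    rw [heq]
    simpa [norm_pow] using h
  -- Taylor expansion of φ
  have hrphi : (fun s => φ s + s / 2) =O[𝓝 (0:ℝ)] fun s => s ^ 2 := by
    have hφ2 : ContDiffOn ℝ 2 φ (ball (0:ℝ) 1) := hφ.contDiffOn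
    obtain ⟨r, hr, _, M, hM⟩ := taylorS2 one_pos hφ2
    rw [isBigO_iff]
    refine ⟨M, ?_⟩
    filter_upwards [ball_mem_nhds (0:ℝ) hr] with s hs
    have h := hM s hs
    have heq : φ s + s / 2 = φ s - φ 0 - deriv φ 0 * (s - 0) := by
      rw [hφ0, hφ'0]; ring
    rw [heq]
    simpa [norm_pow] using h
  have hr1l := hr1.mono hl
  have hr2l := hr2.mono hl
  have hmem : ∀ᶠ x in l, x ≠ x₀ := eventually_mem_nhdsWithin
  have hEt : Tendsto (fun x => x - x₀) l (𝓝 0) := by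
    have h : Tendsto (fun x => x - x₀) (𝓝 x₀) (𝓝 (x₀ - x₀)) :=
      (continuous_id.sub continuous_const).tendsto x₀
    rw [sub_self] at h
    exact h.mono_left hl
  have hEpow : ∀ i j : ℕ, i ≤ j → (fun x => (x - x₀) ^ j) =O[l] fun x => (x - x₀) ^ i := by
    intro i j hij
    rw [isBigO_iff]
    refine ⟨1, ?_⟩
    have h1 : ∀ᶠ x in l, dist (x - x₀) 0 < 1 := (Metric.tendsto_nhds.1 hEt) 1 one_pos
    filter_upwards [h1] with x hx
    rw [Real.dist_eq, sub_zero] at hx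
    simp only [norm_pow, Real.norm_eq_abs, one_mul]
    exact pow_le_pow_of_le_one (abs_nonneg _) hx.le hij
  have hEkt : ∀ k : ℕ, 0 < k → Tendsto (fun x => (x - x₀) ^ k) l (𝓝 0) := by
    intro k hk
    have h := hEt.pow k
    rwa [zero_pow hk.ne'] at h
  have hPCt : Tendsto (fun x => c1 + 2 * c2 * (x - x₀) + 3 * c3 * (x - x₀) ^ 2) l (𝓝 c1) := by
    have hcont : Continuous fun x : ℝ => c1 + 2 * c2 * (x - x₀) + 3 * c3 * (x - x₀) ^ 2 := by
      continuity
    have h := (hcont.tendsto x₀).mono_left hl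
    simpa using h
  have hdf : Tendsto (deriv f) l (𝓝 c1) := by
    have h0 := hr2l.trans_tendsto (hEkt 3 (by norm_num))
    have h := h0.add hPCt
    simpa using h
  have hf'ne : ∀ᶠ x in l, deriv f x ≠ 0 := hdf.eventually_ne hc1
  have hinvf'O : (fun x => (deriv f x)⁻¹) =O[l] fun _ => (1:ℝ) := (hdf.inv₀ hc1).isBigO_one ℝ
  have hmono : ∀ (c : ℝ) (i j : ℕ), i ≤ j →
      (fun x => c * (x - x₀) ^ j) =O[l] fun x => (x - x₀) ^ i :=
    fun c i j h => (hEpow i j h).const_mul_left c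
  -- Newton step expansion
  have hy4 : (fun x => (x - f x / deriv f x) - x₀ -
      (c2 / c1 * (x - x₀) ^ 2 + (2 * c3 / c1 - 2 * c2 ^ 2 / c1 ^ 2) * (x - x₀) ^ 3))
      =O[l] fun x => (x - x₀) ^ 4 := by
    have hQYO : (fun x => (4 * c2 ^ 3 / c1 ^ 2 - 7 * c2 * c3 / c1) +
        (6 * c2 ^ 2 * c3 / c1 ^ 2 - 6 * c3 ^ 2 / c1) * (x - x₀)) =O[l] fun _ => (1:ℝ) :=
      ((Continuous.tendsto (by fun_prop) x₀).mono_left hl).isBigO_one ℝ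
    have hA : (fun x => (x - x₀) ^ 4 * ((4 * c2 ^ 3 / c1 ^ 2 - 7 * c2 * c3 / c1) +
        (6 * c2 ^ 2 * c3 / c1 ^ 2 - 6 * c3 ^ 2 / c1) * (x - x₀))) =O[l]
        fun x => (x - x₀) ^ 4 :=
      ((isBigO_refl (fun x => (x - x₀) ^ 4) l).mul hQYO).congr' EventuallyEq.rfl
        (Eventually.of_forall fun x => mul_one _)
    have hB : (fun x => (x - x₀) *
        (deriv f x - (c1 + 2 * c2 * (x - x₀) + 3 * c3 * (x - x₀) ^ 2))) =O[l]
        fun x => (x - x₀) ^ 4 :=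
      (((isBigO_refl (fun x => x - x₀) l).mul hr2l)).congr' EventuallyEq.rfl
        (Eventually.of_forall fun x => by ring)
    have hBY : (fun x => c2 / c1 * (x - x₀) ^ 2 +
        (2 * c3 / c1 - 2 * c2 ^ 2 / c1 ^ 2) * (x - x₀) ^ 3) =O[l] fun x => (x - x₀) ^ 1 :=
      (hmono (c2 / c1) 1 2 (by norm_num)).add (hmono _ 1 3 (by norm_num))
    have hD : (fun x => (c2 / c1 * (x - x₀) ^ 2 +
        (2 * c3 / c1 - 2 * c2 ^ 2 / c1 ^ 2) * (x - x₀) ^ 3) *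
        (deriv f x - (c1 + 2 * c2 * (x - x₀) + 3 * c3 * (x - x₀) ^ 2))) =O[l]
        fun x => (x - x₀) ^ 4 :=
      (hBY.mul hr2l).congr' EventuallyEq.rfl (Eventually.of_forall fun x => by ring)
    have hNum : (fun x => (x - x₀) * deriv f x - f x -
        (c2 / c1 * (x - x₀) ^ 2 + (2 * c3 / c1 - 2 * c2 ^ 2 / c1 ^ 2) * (x - x₀) ^ 3)
          * deriv f x) =O[l] fun x => (x - x₀) ^ 4 := by
      have hid : ∀ x, (x - x₀) * deriv f x - f x -
          (c2 / c1 * (x - x₀) ^ 2 + (2 * c3 / c1 - 2 * c2 ^ 2 / c1 ^ 2) * (x - x₀) ^ 3)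
            * deriv f x
          = (x - x₀) ^ 4 * ((4 * c2 ^ 3 / c1 ^ 2 - 7 * c2 * c3 / c1) +
              (6 * c2 ^ 2 * c3 / c1 ^ 2 - 6 * c3 ^ 2 / c1) * (x - x₀))
            + ((x - x₀) * (deriv f x - (c1 + 2 * c2 * (x - x₀) + 3 * c3 * (x - x₀) ^ 2))
            - (f x - (c1 * (x - x₀) + c2 * (x - x₀) ^ 2 + c3 * (x - x₀) ^ 3))
            - (c2 / c1 * (x - x₀) ^ 2 + (2 * c3 / c1 - 2 * c2 ^ 2 / c1 ^ 2) * (x - x₀) ^ 3)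
              * (deriv f x - (c1 + 2 * c2 * (x - x₀) + 3 * c3 * (x - x₀) ^ 2))) := by
        intro x; field_simp; ring
      exact (hA.add ((hB.sub hr1l).sub hD)).congr'
        (Eventually.of_forall fun x => (hid x).symm) EventuallyEq.rfl
    refine (hNum.mul hinvf'O).congr' ?_ (Eventually.of_forall fun x => mul_one _)
    filter_upwards [hf'ne] with x hne
    field_simp
    ring
  have hBY2 : (fun x => c2 / c1 * (x - x₀) ^ 2 +
      (2 * c3 / c1 - 2 * c2 ^ 2 / c1 ^ 2) * (x - x₀) ^ 3) =O[l] fun x => (x - x₀) ^ 2 :=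
    (hmono (c2 / c1) 2 2 le_rfl).add (hmono _ 2 3 (by norm_num))
  have hYO : (fun x => (x - f x / deriv f x) - x₀) =O[l] fun x => (x - x₀) ^ 2 :=
    ((hy4.trans (hEpow 2 4 (by norm_num))).add hBY2).congr'
      (Eventually.of_forall fun x => by ring) EventuallyEq.rfl
  have hYtend : Tendsto (fun x => x - f x / deriv f x) l (𝓝 x₀) := by
    have h0 : Tendsto (fun x => (x - f x / deriv f x) - x₀) l (𝓝 0) :=
      hYO.trans_tendsto (hEkt 2 (by norm_num))
    have h := h0.add_const x₀
    simpa using h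
  have hfyPA4 := hr1.comp_tendsto hYtend
  have hY4O : (fun x => ((x - f x / deriv f x) - x₀) ^ 4) =O[l] fun x => (x - x₀) ^ 4 :=
    (hYO.pow 4).trans ((hEpow 4 8 (by norm_num)).congr'
      (Eventually.of_forall fun x => by ring) EventuallyEq.rfl)
  have hE24 : (fun x => ((x - x₀) ^ 2) ^ 2) =O[l] fun x => (x - x₀) ^ 4 :=
    (hEpow 4 4 le_rfl).congr' (Eventually.of_forall fun x => by ring) EventuallyEq.rfl
  have hE26 : (fun x => ((x - x₀) ^ 2) ^ 3) =O[l] fun x => (x - x₀) ^ 4 :=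
    (hEpow 4 6 (by norm_num)).congr' (Eventually.of_forall fun x => by ring) EventuallyEq.rfl
  have key3 : ∀ u v w : ℝ, v - (c2 * w ^ 2 + (2 * c3 - 2 * c2 ^ 2 / c1) * w ^ 3)
      = (v - (c1 * u + c2 * u ^ 2 + c3 * u ^ 3))
        + c1 * (u - (c2 / c1 * w ^ 2 + (2 * c3 / c1 - 2 * c2 ^ 2 / c1 ^ 2) * w ^ 3))
        + c2 * u ^ 2 + c3 * u ^ 3 := by
    intro u v w; field_simp; ring
  have hr3 : (fun x => f (x - f x / deriv f x) -
      (c2 * (x - x₀) ^ 2 + (2 * c3 - 2 * c2 ^ 2 / c1) * (x - x₀) ^ 3)) =O[l]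
      fun x => (x - x₀) ^ 4 := by
    have hA : (fun x => f (x - f x / deriv f x) - (c1 * ((x - f x / deriv f x) - x₀)
        + c2 * ((x - f x / deriv f x) - x₀) ^ 2 + c3 * ((x - f x / deriv f x) - x₀) ^ 3))
        =O[l] fun x => (x - x₀) ^ 4 := hfyPA4.trans hY4O
    have hB := hy4.const_mul_left c1
    have hC := ((hYO.pow 2).const_mul_left c2).trans hE24
    have hD := ((hYO.pow 3).const_mul_left c3).trans hE26
    exact (((hA.add hB).add hC).add hD).congr'
      (Eventually.of_forall fun x =>
        (key3 ((x - f x / deriv f x) - x₀) (f (x - f x / deriv f x)) (x - x₀)).symm)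
      EventuallyEq.rfl
  have hPB2 : (fun x => c2 * (x - x₀) ^ 2 + (2 * c3 - 2 * c2 ^ 2 / c1) * (x - x₀) ^ 3)
      =O[l] fun x => (x - x₀) ^ 2 :=
    (hmono c2 2 2 le_rfl).add (hmono _ 2 3 (by norm_num))
  have hfyO : (fun x => f (x - f x / deriv f x)) =O[l] fun x => (x - x₀) ^ 2 :=
    ((hr3.trans (hEpow 2 4 (by norm_num))).add hPB2).congr'
      (Eventually.of_forall fun x => by ring) EventuallyEq.rfl
  have hfyE : (fun x => f (x - f x / deriv f x) / (x - x₀)) =O[l] fun x => (x - x₀) ^ 1 :=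
    divE (k := 1) hfyO
  have hfyEt : Tendsto (fun x => f (x - f x / deriv f x) / (x - x₀)) l (𝓝 0) :=
    hfyE.trans_tendsto (hEkt 1 one_pos)
  have hfEt : Tendsto (fun x => f x / (x - x₀)) l (𝓝 c1) := by
    have h1 : (fun x => (f x - (c1 * (x - x₀) + c2 * (x - x₀) ^ 2 + c3 * (x - x₀) ^ 3))
        / (x - x₀)) =O[l] fun x => (x - x₀) ^ 3 := divE (k := 3) hr1l
    have h2 := h1.trans_tendsto (hEkt 3 (by norm_num))
    have h3 : Tendsto (fun x => c1 + c2 * (x - x₀) + c3 * (x - x₀) ^ 2) l (𝓝 c1) := by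
      have hcont : Continuous fun x : ℝ => c1 + c2 * (x - x₀) + c3 * (x - x₀) ^ 2 := by
        fun_prop
      have h := (hcont.tendsto x₀).mono_left hl
      simpa using h
    have h4 := h2.add h3
    rw [zero_add] at h4
    refine Tendsto.congr' ?_ h4
    filter_upwards [hmem] with x hx
    have hxe : x - x₀ ≠ 0 := sub_ne_zero.2 hx
    field_simp
    ring
  have hfne : ∀ᶠ x in l, f x ≠ 0 := by
    filter_upwards [hfEt.eventually_ne hc1] with x h1
    exact fun h0 => h1 (by rw [h0, zero_div])
  have hgEt : Tendsto (fun x => (f x - f (x - f x / deriv f x)) / (x - x₀)) l (𝓝 c1) := by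
    have h := hfEt.sub hfyEt
    rw [sub_zero] at h
    exact h.congr fun x => (sub_div _ _ _).symm
  have hgne : ∀ᶠ x in l, f x - f (x - f x / deriv f x) ≠ 0 := by
    filter_upwards [hgEt.eventually_ne hc1] with x h1
    exact fun h0 => h1 (by rw [h0, zero_div])
  have hgO : (fun x => f x - f (x - f x / deriv f x)) =O[l] fun x => (x - x₀) ^ 1 := by
    refine ((hgEt.isBigO_one ℝ).mul (isBigO_refl (fun x => x - x₀) l)).congr' ?_
      (Eventually.of_forall fun x => by ring)
    filter_upwards [hmem] with x hx
    exact div_mul_cancel₀ _ (sub_ne_zero.2 hx)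
  have hfO : f =O[l] fun x => (x - x₀) ^ 1 := by
    refine ((hfEt.isBigO_one ℝ).mul (isBigO_refl (fun x => x - x₀) l)).congr' ?_
      (Eventually.of_forall fun x => by ring)
    filter_upwards [hmem] with x hx
    exact div_mul_cancel₀ _ (sub_ne_zero.2 hx)
  have hEfT : Tendsto (fun x => (x - x₀) / f x) l (𝓝 c1⁻¹) := by
    have h := hfEt.inv₀ hc1
    exact h.congr fun x => by rw [inv_div]
  have hTO : (fun x => f (x - f x / deriv f x) / f x) =O[l] fun x => (x - x₀) ^ 1 := by
    refine ((hfyE.mul (hEfT.isBigO_one ℝ)).congr' ?_ (Eventually.of_forall fun x => by ring))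
    filter_upwards [hmem] with x hx
    rw [div_mul_div_comm, mul_comm (x - x₀) (f x), mul_div_mul_right _ _ (sub_ne_zero.2 hx)]
  have hTt : Tendsto (fun x => f (x - f x / deriv f x) / f x) l (𝓝 0) :=
    hTO.trans_tendsto (hEkt 1 one_pos)
  have hq : (fun x => φ (f (x - f x / deriv f x) / f x)
      + (f (x - f x / deriv f x) / f x) / 2) =O[l] fun x => (x - x₀) ^ 2 := by
    have h1 := hrphi.comp_tendsto hTt
    have h2 : (fun x => (f (x - f x / deriv f x) / f x) ^ 2) =O[l]
        fun x => (x - x₀) ^ 2 :=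
      (hTO.pow 2).congr' EventuallyEq.rfl (Eventually.of_forall fun x => by ring)
    exact (h1.congr' (Eventually.of_forall fun x => rfl)
      (Eventually.of_forall fun x => rfl)).trans h2
  -- abbreviation-level big-O facts
  have hf'O1 : (deriv f) =O[l] fun _ => (1:ℝ) := hdf.isBigO_one ℝ
  have hPGO : (fun x => c1 * (x - x₀) + (2 * c2 ^ 2 / c1 - c3) * (x - x₀) ^ 3)
      =O[l] fun x => (x - x₀) ^ 1 := by
    have h := (hmono c1 1 1 le_rfl).add (hmono (2 * c2 ^ 2 / c1 - c3) 1 3 (by norm_num))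
    exact h.congr' (Eventually.of_forall fun x => by ring) EventuallyEq.rfl
  have hPAO : (fun x => c1 * (x - x₀) + c2 * (x - x₀) ^ 2 + c3 * (x - x₀) ^ 3)
      =O[l] fun x => (x - x₀) ^ 1 := by
    have h := ((hmono c1 1 1 le_rfl).add (hmono c2 1 2 (by norm_num))).add
      (hmono c3 1 3 (by norm_num))
    exact h.congr' (Eventually.of_forall fun x => by ring) EventuallyEq.rfl
  have hrgO : (fun x => (f x - f (x - f x / deriv f x))
      - (c1 * (x - x₀) + (2 * c2 ^ 2 / c1 - c3) * (x - x₀) ^ 3)) =O[l]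
      fun x => (x - x₀) ^ 4 :=
    (hr1l.sub hr3).congr' (Eventually.of_forall fun x => by ring) EventuallyEq.rfl
  have hfy2fO : (fun x => f (x - f x / deriv f x) - 2 * f x) =O[l]
      fun x => (x - x₀) ^ 1 :=
    (hfyO.trans (hEpow 1 2 (by norm_num))).sub (hfO.const_mul_left 2)
  -- the order-6 identity
  have key6 : ∀ e fv fy dv : ℝ,
      e*(fv - fy)^2*dv - fv^2*(fv - fy) + fy^2*(fy - 2*fv)/2
      = e^6*((15/2*c2^3 - 8*c1*c2*c3) + (-c2^4/c1 + 11*c2^2*c3 - 8*c1*c3^2)*e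
          + (10*c2^5/c1^2 - 12*c2^3*c3/c1 + 2*c2*c3^2)*e^2
          + (-4*c2^6/c1^3 + 20*c2^4*c3/c1^2 - 18*c2^2*c3^2/c1 + 4*c3^3)*e^3)
        + e*((c1*e + (2*c2^2/c1 - c3)*e^3)^2*(dv - (c1 + 2*c2*e + 3*c3*e^2))
            + (2*(c1*e + (2*c2^2/c1 - c3)*e^3)*((fv - fy) - (c1*e + (2*c2^2/c1 - c3)*e^3))
              + ((fv - fy) - (c1*e + (2*c2^2/c1 - c3)*e^3))^2)*dv)
        - ((c1*e + c2*e^2 + c3*e^3)^2*((fv - fy) - (c1*e + (2*c2^2/c1 - c3)*e^3))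
            + (2*(c1*e + c2*e^2 + c3*e^3)*(fv - (c1*e + c2*e^2 + c3*e^3))
              + (fv - (c1*e + c2*e^2 + c3*e^3))^2)*(fv - fy))
        + 1/2*((c2*e^2 + (2*c3 - 2*c2^2/c1)*e^3)^2*((fy - (c2*e^2 + (2*c3 - 2*c2^2/c1)*e^3))
              - 2*(fv - (c1*e + c2*e^2 + c3*e^3)))
            + (2*(c2*e^2 + (2*c3 - 2*c2^2/c1)*e^3)*(fy - (c2*e^2 + (2*c3 - 2*c2^2/c1)*e^3))
              + (fy - (c2*e^2 + (2*c3 - 2*c2^2/c1)*e^3))^2)*(fy - 2*fv)) := by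
    intro e fv fy dv
    field_simp
    ring
  have hQMO : (fun x => (15/2*c2^3 - 8*c1*c2*c3) + (-c2^4/c1 + 11*c2^2*c3 - 8*c1*c3^2)*(x - x₀)
      + (10*c2^5/c1^2 - 12*c2^3*c3/c1 + 2*c2*c3^2)*(x - x₀)^2
      + (-4*c2^6/c1^3 + 20*c2^4*c3/c1^2 - 18*c2^2*c3^2/c1 + 4*c3^3)*(x - x₀)^3)
      =O[l] fun _ => (1:ℝ) :=
    ((Continuous.tendsto (by fun_prop) x₀).mono_left hl).isBigO_one ℝ
  have hS1 : (fun x => (x - x₀)^6*((15/2*c2^3 - 8*c1*c2*c3)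
      + (-c2^4/c1 + 11*c2^2*c3 - 8*c1*c3^2)*(x - x₀)
      + (10*c2^5/c1^2 - 12*c2^3*c3/c1 + 2*c2*c3^2)*(x - x₀)^2
      + (-4*c2^6/c1^3 + 20*c2^4*c3/c1^2 - 18*c2^2*c3^2/c1 + 4*c3^3)*(x - x₀)^3))
      =O[l] fun x => (x - x₀)^6 :=
    ((isBigO_refl (fun x => (x - x₀)^6) l).mul hQMO).congr' EventuallyEq.rfl
      (Eventually.of_forall fun x => mul_one _)
  have h2a := ((hPGO.pow 2).mul hr2l).congr' EventuallyEq.rfl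
    (Eventually.of_forall fun x => show ((x - x₀)^1)^2*(x - x₀)^3 = (x - x₀)^5 by ring)
  have h2b := ((hPGO.const_mul_left 2).mul hrgO).congr' EventuallyEq.rfl
    (Eventually.of_forall fun x => show (x - x₀)^1*(x - x₀)^4 = (x - x₀)^5 by ring)
  have h2c := ((hrgO.pow 2).congr' EventuallyEq.rfl
    (Eventually.of_forall fun x => show ((x - x₀)^4)^2 = (x - x₀)^8 by ring)).trans
    (hEpow 5 8 (by norm_num))
  have h2d := (((h2b.add h2c)).mul hf'O1).congr' EventuallyEq.rfl
    (Eventually.of_forall fun x => mul_one _)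
  have hS2 := ((isBigO_refl (fun x => x - x₀) l).mul (h2a.add h2d)).congr' EventuallyEq.rfl
    (Eventually.of_forall fun x => show (x - x₀)*(x - x₀)^5 = (x - x₀)^6 by ring)
  have h3a := ((hPAO.pow 2).mul hrgO).congr' EventuallyEq.rfl
    (Eventually.of_forall fun x => show ((x - x₀)^1)^2*(x - x₀)^4 = (x - x₀)^6 by ring)
  have h3b := ((hPAO.const_mul_left 2).mul hr1l).congr' EventuallyEq.rfl
    (Eventually.of_forall fun x => show (x - x₀)^1*(x - x₀)^4 = (x - x₀)^5 by ring)
  have h3c := ((hr1l.pow 2).congr' EventuallyEq.rfl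
    (Eventually.of_forall fun x => show ((x - x₀)^4)^2 = (x - x₀)^8 by ring)).trans
    (hEpow 5 8 (by norm_num))
  have h3d := ((h3b.add h3c).mul hgO).congr' EventuallyEq.rfl
    (Eventually.of_forall fun x => show (x - x₀)^5*(x - x₀)^1 = (x - x₀)^6 by ring)
  have hS3 := h3a.add h3d
  have h4a := (((hPB2.pow 2).mul (hr3.sub (hr1l.const_mul_left 2))).congr' EventuallyEq.rfl
    (Eventually.of_forall fun x => show ((x - x₀)^2)^2*(x - x₀)^4 = (x - x₀)^8 by ring)).trans
    (hEpow 6 8 (by norm_num))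
  have h4b := ((hPB2.const_mul_left 2).mul hr3).congr' EventuallyEq.rfl
    (Eventually.of_forall fun x => show (x - x₀)^2*(x - x₀)^4 = (x - x₀)^6 by ring)
  have h4c := ((hr3.pow 2).congr' EventuallyEq.rfl
    (Eventually.of_forall fun x => show ((x - x₀)^4)^2 = (x - x₀)^8 by ring)).trans
    (hEpow 6 8 (by norm_num))
  have h4d := (((h4b.add h4c)).mul hfy2fO).congr' EventuallyEq.rfl
    (Eventually.of_forall fun x => show (x - x₀)^6*(x - x₀)^1 = (x - x₀)^7 by ring)
  have h4d' := h4d.trans (hEpow 6 7 (by norm_num))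
  have hS4 := (h4a.add h4d').const_mul_left (1/2 : ℝ)
  have hM1 := ((((hS1.add hS2).sub hS3).add hS4).congr'
    (Eventually.of_forall fun x =>
      (key6 (x - x₀) (f x) (f (x - f x / deriv f x)) (deriv f x)).symm) EventuallyEq.rfl)
  have key7 : ∀ fv fy e dv w : ℝ, fv ≠ 0 →
      e*(fv - fy)^2*dv - fv^2*(fv - fy) - fy*(fy - 2*fv)*fv*w
      = (e*(fv - fy)^2*dv - fv^2*(fv - fy) + fy^2*(fy - 2*fv)/2)
        - fy*(fy - 2*fv)*fv*(w + fy/fv/2) := by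
    intro fv fy e dv w hfv
    field_simp
    ring
  have hqterm : (fun x => f (x - f x / deriv f x)*(f (x - f x / deriv f x) - 2*f x)*f x*
      (φ (f (x - f x / deriv f x) / f x) + f (x - f x / deriv f x) / f x / 2)) =O[l]
      fun x => (x - x₀)^6 :=
    (((hfyO.mul hfy2fO).mul hfO).mul hq).congr' EventuallyEq.rfl
      (Eventually.of_forall fun x =>
        show (x - x₀)^2*(x - x₀)^1*(x - x₀)^1*(x - x₀)^2 = (x - x₀)^6 by ring)
  have hN : (fun x => (x - x₀)*(f x - f (x - f x / deriv f x))^2*deriv f x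
      - (f x)^2*(f x - f (x - f x / deriv f x))
      - f (x - f x / deriv f x)*(f (x - f x / deriv f x) - 2*f x)*f x*
        φ (f (x - f x / deriv f x) / f x)) =O[l] fun x => (x - x₀)^6 := by
    refine (hM1.sub hqterm).congr' ?_ EventuallyEq.rfl
    filter_upwards [hfne] with x hfx
    exact (key7 (f x) (f (x - f x / deriv f x)) (x - x₀) (deriv f x)
      (φ (f (x - f x / deriv f x) / f x)) hfx).symm
  have hN5 := divE (k := 5) hN
  have hNdiv : (fun x => ((x - x₀)*(f x - f (x - f x / deriv f x))^2*deriv f x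
      - (f x)^2*(f x - f (x - f x / deriv f x))
      - f (x - f x / deriv f x)*(f (x - f x / deriv f x) - 2*f x)*f x*
        φ (f (x - f x / deriv f x) / f x)) / (x - x₀)^2) =O[l] fun x => (x - x₀)^4 :=
    (divE (k := 4) hN5).congr' (Eventually.of_forall fun x => by simp only [div_div]; ring_nf)
      EventuallyEq.rfl
  have hgg := (hgEt.pow 2).mul hdf
  have hDinvt : Tendsto (fun x => (x - x₀)^2/((f x - f (x - f x / deriv f x))^2*deriv f x))
      l (𝓝 (c1^2*c1)⁻¹) :=
    (hgg.inv₀ (mul_ne_zero (pow_ne_zero 2 hc1) hc1)).congr fun x => by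
      rw [div_pow, div_mul_eq_mul_div, inv_div]
  have hDinvO := hDinvt.isBigO_one ℝ
  have key8 : ∀ xx fv fy dv w : ℝ, xx - x₀ ≠ 0 → dv ≠ 0 → fv - fy ≠ 0 →
      ((xx - x₀)*(fv - fy)^2*dv - fv^2*(fv - fy) - fy*(fy - 2*fv)*fv*w) / (xx - x₀)^2
        * ((xx - x₀)^2/((fv - fy)^2*dv))
      = xx - fv^2/((fv - fy)*dv)
        - (1 - fv/(fv - fy)*(1 + fy/(fv - fy)))*(fv/dv)*w - x₀ := by
    intro xx fv fy dv w hxx hdv hg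
    field_simp
    ring
  have hfinal : (fun x => x - f x^2/((f x - f (x - f x / deriv f x))*deriv f x)
      - (1 - f x/(f x - f (x - f x / deriv f x))
          *(1 + f (x - f x / deriv f x)/(f x - f (x - f x / deriv f x))))
        *(f x/deriv f x)*φ (f (x - f x / deriv f x) / f x) - x₀)
      =O[l] fun x => (x - x₀)^4 := by
    refine (hNdiv.mul hDinvO).congr' ?_ (Eventually.of_forall fun x => mul_one _)
    filter_upwards [hmem, hf'ne, hgne] with x hx h1 h3
    exact key8 x (f x) (f (x - f x / deriv f x)) (deriv f x)
      (φ (f (x - f x / deriv f x) / f x)) (sub_ne_zero.2 hx) h1 h3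
  obtain ⟨Cb, hCb⟩ := hfinal.bound
  rw [eventually_nhdsWithin_iff] at hCb
  obtain ⟨U, hU, hUsub⟩ := eventually_iff_exists_mem.mp hCb
  refine ⟨max Cb 1, lt_of_lt_of_le one_pos (le_max_right _ _), U, hU, ?_⟩
  intro x hxU hd hf0 hfy0
  intro y z t F
  by_cases hxx : x = x₀
  · exact absurd (hxx ▸ hroot) hf0
  · have hb := hUsub x hxU (Set.mem_compl_singleton_iff.mpr hxx)
    simp only [Real.norm_eq_abs] at hb
    have habs : |(x - x₀)^4| = |x - x₀|^4 := abs_pow _ _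
    rw [habs] at hb
    have : |F - x₀| ≤ Cb * |x - x₀|^4 := hb
    calc |F - x₀| ≤ Cb * |x - x₀|^4 := this
      _ ≤ max Cb 1 * |x - x₀|^4 :=
        mul_le_mul_of_nonneg_right (le_max_left _ _) (by positivity)
end

section
/- Let f : ℝ → ℝ be twice continuously differentiable on an open interval D and let x* ∈ D be a simple zero of f. Define c₂ = f''(x*)/(2 f'(x*)). For x near x* with y = x - f(x)/f'(x), the quantity f(y)·(f'(x))²/f(x)² converges to f''(x*)/2 as x → x* (x ≠ x*). -/
open Filter Topology

private lemma stmt16_alg (P c a d N : ℝ) (ha : a ≠ 0) (hd : d ≠ 0) :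
    P * (N / d ^ 2) * a / c ^ 2 = P * (N / d ^ 2 * d ^ 2 / a) * a ^ 2 / (c * d) ^ 2 := by
  rcases eq_or_ne c 0 with hc | hc
  · simp [hc, mul_pow]
  · field_simp

theorem stmt16 (D : Set ℝ) (hD : IsOpen D) (hDconn : D.OrdConnected)
    (f : ℝ → ℝ) (hf : ContDiffOn ℝ 2 f D)
    (x₀ : ℝ) (hx₀ : x₀ ∈ D) (hroot : f x₀ = 0) (hder : deriv f x₀ ≠ 0) :
    Filter.Tendsto
      (fun x : ℝ => f (x - f x / deriv f x) * (deriv f x)^2 / (f x)^2)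
      (nhdsWithin x₀ {x₀}ᶜ)
      (nhds (iteratedDeriv 2 f x₀ / 2)) := by
  have hDn : D ∈ 𝓝 x₀ := hD.mem_nhds hx₀
  have hf1 : ContDiffOn ℝ 1 (deriv f) D := hf.deriv_of_isOpen hD (by norm_num)
  have hfd : ∀ x ∈ D, HasDerivAt f (deriv f x) x := fun x hx =>
    ((hf.contDiffAt (hD.mem_nhds hx)).differentiableAt two_ne_zero).hasDerivAt
  have hfd2 : ∀ x ∈ D, HasDerivAt (deriv f) (deriv (deriv f) x) x := fun x hx =>
    ((hf1.contDiffAt (hD.mem_nhds hx)).differentiableAt one_ne_zero).hasDerivAt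
  have hcontf : ContinuousAt f x₀ := (hf.continuousOn.continuousAt hDn)
  have hcont1 : ContinuousAt (deriv f) x₀ := (hf1.continuousOn.continuousAt hDn)
  have hcont2 : ContinuousAt (deriv (deriv f)) x₀ :=
    (hf1.continuousOn_deriv_of_isOpen hD le_rfl).continuousAt hDn
  have hA : iteratedDeriv 2 f x₀ = deriv (deriv f) x₀ := by
    rw [iteratedDeriv_succ, iteratedDeriv_one]
  -- the slope function
  set φ : ℝ → ℝ := fun t => if t = x₀ then deriv f x₀ else f t / (t - x₀) with hφdef
  have hφf : ∀ t, f t = φ t * (t - x₀) := by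
    intro t
    by_cases h : t = x₀
    · simp [φ, h, hroot]
    · simp only [φ, if_neg h]
      rw [div_mul_cancel₀ _ (sub_ne_zero.mpr h)]
  have hφtendsto : Tendsto φ (𝓝 x₀) (𝓝 (deriv f x₀)) := by
    rw [← nhdsNE_sup_pure x₀, tendsto_sup]
    constructor
    · have hs := hasDerivAt_iff_tendsto_slope.mp (hfd x₀ hx₀)
      refine hs.congr' ?_
      filter_upwards [self_mem_nhdsWithin] with t ht
      have ht' : t ≠ x₀ := ht
      simp [slope_def_field, φ, ht', hroot]
    · have := tendsto_pure_nhds φ x₀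
      simpa [φ] using this
  -- second-order remainder limit via L'Hopital
  have hψ : Tendsto (fun x => (deriv f x * (x - x₀) - f x) / (x - x₀) ^ 2)
      (𝓝[≠] x₀) (𝓝 (deriv (deriv f) x₀ / 2)) := by
    have hDmem : D ∈ 𝓝[≠] x₀ := nhdsWithin_le_nhds hDn
    apply HasDerivAt.lhopital_zero_nhdsNE
      (f' := fun x => deriv (deriv f) x * (x - x₀)) (g' := fun x => 2 * (x - x₀))
    · filter_upwards [hDmem] with x hx
      have h := ((hfd2 x hx).mul ((hasDerivAt_id x).sub_const x₀)).sub (hfd x hx)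
      refine h.congr_deriv ?_
      simp only [id_eq]
      ring
    · filter_upwards [hDmem] with x hx
      have h := ((hasDerivAt_id x).sub_const x₀).pow 2
      refine h.congr_deriv ?_
      simp only [id_eq]
      ring
    · filter_upwards [self_mem_nhdsWithin] with x hx
      have hx' : x ≠ x₀ := hx
      simp [sub_ne_zero.mpr hx']
    · have hc : ContinuousAt (fun x => deriv f x * (x - x₀) - f x) x₀ :=
        (hcont1.mul (continuousAt_id.sub continuousAt_const)).sub hcontf
      have := hc.tendsto.mono_left (nhdsWithin_le_nhds (s := {x₀}ᶜ))
      simpa [hroot] using this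
    · have hc : ContinuousAt (fun x : ℝ => (x - x₀) ^ 2) x₀ :=
        (continuousAt_id.sub continuousAt_const).pow 2
      have := hc.tendsto.mono_left (nhdsWithin_le_nhds (s := {x₀}ᶜ))
      simpa using this
    · have hc : Tendsto (fun x => deriv (deriv f) x / 2) (𝓝[≠] x₀)
          (𝓝 (deriv (deriv f) x₀ / 2)) :=
        (hcont2.tendsto.div_const 2).mono_left nhdsWithin_le_nhds
      refine hc.congr' ?_
      filter_upwards [self_mem_nhdsWithin] with x hx
      have hx' : (x - x₀) ≠ 0 := sub_ne_zero.mpr hx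
      rw [mul_comm (deriv (deriv f) x) (x - x₀), mul_comm (2 : ℝ) (x - x₀),
        mul_div_mul_left _ _ hx']
  -- Newton map
  have hgc : ContinuousAt (fun x => x - f x / deriv f x) x₀ :=
    continuousAt_id.sub (hcontf.div hcont1 hder)
  have hgten : Tendsto (fun x => x - f x / deriv f x) (𝓝[≠] x₀) (𝓝 x₀) := by
    have := hgc.tendsto.mono_left (nhdsWithin_le_nhds (s := {x₀}ᶜ))
    simpa [hroot] using this
  have hφy : Tendsto (fun x => φ (x - f x / deriv f x)) (𝓝[≠] x₀) (𝓝 (deriv f x₀)) :=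
    hφtendsto.comp hgten
  have hφx : Tendsto φ (𝓝[≠] x₀) (𝓝 (deriv f x₀)) := hφtendsto.mono_left nhdsWithin_le_nhds
  have hf'ten : Tendsto (deriv f) (𝓝[≠] x₀) (𝓝 (deriv f x₀)) :=
    hcont1.tendsto.mono_left nhdsWithin_le_nhds
  have hf'ne : ∀ᶠ x in 𝓝[≠] x₀, deriv f x ≠ 0 :=
    (hcont1.eventually_ne hder).filter_mono nhdsWithin_le_nhds
  -- combine
  have T : Tendsto (fun x => φ (x - f x / deriv f x) *
        ((deriv f x * (x - x₀) - f x) / (x - x₀) ^ 2) * deriv f x / (φ x) ^ 2)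
      (𝓝[≠] x₀) (𝓝 (deriv f x₀ * (deriv (deriv f) x₀ / 2) * deriv f x₀ / (deriv f x₀) ^ 2)) :=
    ((hφy.mul hψ).mul hf'ten).div (hφx.pow 2) (pow_ne_zero 2 hder)
  have hval : deriv f x₀ * (deriv (deriv f) x₀ / 2) * deriv f x₀ / (deriv f x₀) ^ 2
      = iteratedDeriv 2 f x₀ / 2 := by
    rw [hA]; field_simp
  rw [hval] at T
  refine T.congr' ?_
  filter_upwards [self_mem_nhdsWithin, hf'ne] with x hx ha
  have hx' : x ≠ x₀ := hx
  have hd : x - x₀ ≠ 0 := sub_ne_zero.mpr hx'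
  have key1 : x - f x / deriv f x - x₀
      = (deriv f x * (x - x₀) - f x) / (x - x₀) ^ 2 * (x - x₀) ^ 2 / deriv f x := by
    field_simp
    ring
  calc φ (x - f x / deriv f x) * ((deriv f x * (x - x₀) - f x) / (x - x₀) ^ 2) * deriv f x / (φ x) ^ 2
      = φ (x - f x / deriv f x) * ((deriv f x * (x - x₀) - f x) / (x - x₀) ^ 2 * (x - x₀) ^ 2
          / deriv f x) * (deriv f x) ^ 2 / (φ x * (x - x₀)) ^ 2 :=
        stmt16_alg _ _ _ _ _ ha hd
    _ = f (x - f x / deriv f x) * (deriv f x) ^ 2 / (f x) ^ 2 := by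
        rw [← key1, ← hφf x, ← hφf (x - f x / deriv f x)]
end

section
/- Let f : ℝ → ℝ be three times continuously differentiable on an open interval D, let x* ∈ D be a simple zero of f, and set c₂ = f''(x*)/(2f'(x*)). For x near x*, let e = x - x*, y = x - f(x)/f'(x), and z = x - f(x)²/((f(x)-f(y))·f'(x)). Then (z - x*)/e³ → c₂² as e → 0. -/
open Filter Topology

set_option maxHeartbeats 1000000 in
theorem stmt17 (D : Set ℝ) (hD : IsOpen D) (hDconn : D.OrdConnected)
    (f : ℝ → ℝ) (hf : ContDiffOn ℝ 3 f D)
    (x₀ : ℝ) (hx₀ : x₀ ∈ D) (hroot : f x₀ = 0) (hder : deriv f x₀ ≠ 0) :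
    Filter.Tendsto
      (fun e : ℝ =>
        (let x := x₀ + e
         let y := x - f x / deriv f x
         let z := x - (f x)^2 / ((f x - f y) * deriv f x)
         (z - x₀) / e^3))
      (nhdsWithin 0 {0}ᶜ)
      (nhds ((iteratedDeriv 2 f x₀ / (2 * deriv f x₀))^2)) := by
  set a := deriv f x₀ with ha
  set b := iteratedDeriv 2 f x₀ with hb
  set c : ℝ := b / (2 * a) with hc
  set l : Filter ℝ := 𝓝[≠] (0:ℝ) with hl
  have hDn : D ∈ 𝓝 x₀ := hD.mem_nhds hx₀
  -- basic maps
  have haddn : Tendsto (fun e : ℝ => x₀ + e) (𝓝 (0:ℝ)) (𝓝 x₀) := by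
    simpa using ((continuous_add_left x₀).tendsto (0:ℝ))
  have hmap : Tendsto (fun e : ℝ => x₀ + e) l (𝓝[≠] x₀) := by
    apply tendsto_nhdsWithin_of_tendsto_nhds_of_eventually_within
    · exact haddn.mono_left nhdsWithin_le_nhds
    · filter_upwards [self_mem_nhdsWithin] with e he
      simpa using he
  -- differentiability facts
  have hdf : ∀ᶠ x in 𝓝 x₀, DifferentiableAt ℝ f x := by
    filter_upwards [hD.eventually_mem hx₀] with x hx
    exact ((hf.contDiffAt (hD.mem_nhds hx)).differentiableAt (by norm_num))
  have hf1 : ContDiffOn ℝ 2 (deriv f) D := hf.deriv_of_isOpen hD (by norm_num)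
  have hfd : HasDerivAt f a x₀ := by
    rw [ha]; exact (hdf.self_of_nhds).hasDerivAt
  have hb2 : b = deriv (deriv f) x₀ := by
    rw [hb, iteratedDeriv_succ, iteratedDeriv_one]
  have hfd2 : HasDerivAt (deriv f) b x₀ := by
    rw [hb2]
    exact (((hf1.contDiffAt hDn).differentiableAt (by norm_num))).hasDerivAt
  -- slope limits
  have hu : Tendsto (fun e : ℝ => f (x₀ + e) / e) l (𝓝 a) := by
    have := (hasDerivAt_iff_tendsto_slope.mp hfd).comp hmap
    apply this.congr
    intro e
    simp [slope_def_field, hroot, div_eq_div_iff]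
  have ht : Tendsto (fun e : ℝ => (deriv f (x₀ + e) - a) / e) l (𝓝 b) := by
    have := (hasDerivAt_iff_tendsto_slope.mp hfd2).comp hmap
    apply this.congr
    intro e
    simp [slope_def_field, ha]
  have hv : Tendsto (fun e : ℝ => deriv f (x₀ + e)) l (𝓝 a) := by
    have := ((hf1.continuousOn.continuousAt hDn).tendsto.comp haddn)
    exact this.mono_left nhdsWithin_le_nhds
  -- second order Taylor via L'Hopital
  have hev : ∀ᶠ e in 𝓝 (0:ℝ), DifferentiableAt ℝ f (x₀ + e) := haddn.eventually hdf
  have hs : Tendsto (fun e : ℝ => (f (x₀ + e) - a * e) / e ^ 2) l (𝓝 (b / 2)) := by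
    apply HasDerivAt.lhopital_zero_nhdsNE
      (f' := fun e => deriv f (x₀ + e) - a) (g' := fun e => 2 * e)
    · filter_upwards [hev.filter_mono nhdsWithin_le_nhds] with e he
      have h1 : HasDerivAt (fun e : ℝ => f (x₀ + e)) (deriv f (x₀ + e) * 1) e :=
        he.hasDerivAt.comp e ((hasDerivAt_id e).const_add x₀)
      exact (h1.sub ((hasDerivAt_id e).const_mul a)).congr_deriv (by ring)
    · filter_upwards with e
      simpa using hasDerivAt_pow 2 e
    · filter_upwards [self_mem_nhdsWithin] with e he
      simpa using he
    · have h0 : Tendsto (fun e : ℝ => f (x₀ + e)) (𝓝 (0:ℝ)) (𝓝 (f x₀)) :=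
        (hf.continuousOn.continuousAt hDn).tendsto.comp haddn
      have h1 : Tendsto (fun e : ℝ => f (x₀ + e) - a * e) (𝓝 (0:ℝ)) (𝓝 (f x₀ - a * 0)) :=
        h0.sub (tendsto_const_nhds.mul tendsto_id)
      have h2 := h1.mono_left (nhdsWithin_le_nhds (s := {(0:ℝ)}ᶜ))
      simpa [hroot] using h2
    · have h3 : Tendsto (fun e : ℝ => e ^ 2) (𝓝 (0:ℝ)) (𝓝 ((0:ℝ) ^ 2)) :=
        (continuous_pow 2).tendsto 0
      simpa using h3.mono_left (nhdsWithin_le_nhds (s := {(0:ℝ)}ᶜ))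
    · have h4 := ht.div_const 2
      apply h4.congr
      intro e
      rw [div_div, mul_comm]
  -- abbreviations
  set F : ℝ → ℝ := fun e => f (x₀ + e) with hF
  set F' : ℝ → ℝ := fun e => deriv f (x₀ + e) with hF'
  set N : ℝ → ℝ := fun e => e - F e / F' e with hN
  set G : ℝ → ℝ := fun e => f (x₀ + N e) with hG
  set r : ℝ → ℝ := fun e => G e - a * N e with hr
  have hene : ∀ᶠ e in l, e ≠ 0 := by
    filter_upwards [self_mem_nhdsWithin] with e he; simpa using he
  have hF'ne : ∀ᶠ e in l, F' e ≠ 0 := hv.eventually_ne hder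
  -- Newton error
  have hn : Tendsto (fun e : ℝ => N e / e ^ 2) l (𝓝 c) := by
    have h1 : Tendsto (fun e : ℝ =>
        ((F' e - a) / e - (F e - a * e) / e ^ 2) / F' e) l (𝓝 ((b - b / 2) / a)) :=
      (ht.sub hs).div hv hder
    have h2 : (b - b / 2) / a = c := by
      rw [hc]; field_simp; ring
    rw [h2] at h1
    apply h1.congr'
    filter_upwards [hene, hF'ne] with e he hF'e
    rw [hN]
    field_simp
    ring
  have hN0 : Tendsto N l (𝓝 0) := by
    have h1 : Tendsto (fun e : ℝ => (N e / e ^ 2) * e ^ 2) l (𝓝 (c * 0 ^ 2)) := by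
      refine hn.mul ?_
      have := ((continuous_pow 2).tendsto (0:ℝ)).mono_left (nhdsWithin_le_nhds (s := {(0:ℝ)}ᶜ))
      exact this
    have h2 : Tendsto (fun e : ℝ => (N e / e ^ 2) * e ^ 2) l (𝓝 0) := by simpa using h1
    apply h2.congr'
    filter_upwards [hene] with e he
    field_simp
  -- remainder bound
  set C : ℝ := |b / 2| + 1 with hC
  have hRb : ∀ᶠ t in 𝓝 (0:ℝ), |f (x₀ + t) - a * t| ≤ C * t ^ 2 := by
    have h1 : ∀ᶠ t in l, |(f (x₀ + t) - a * t) / t ^ 2| < C := by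
      have := hs.abs
      exact this.eventually_lt_const (lt_add_one _)
    have h2 : ∀ᶠ t in l, |f (x₀ + t) - a * t| ≤ C * t ^ 2 := by
      filter_upwards [h1, hene] with t h1t ht0
      have ht2 : (0:ℝ) < t ^ 2 := by positivity
      have h3 : |f (x₀ + t) - a * t| / t ^ 2 < C := by
        rwa [abs_div, abs_of_pos ht2] at h1t
      calc |f (x₀ + t) - a * t| = (|f (x₀ + t) - a * t| / t ^ 2) * t ^ 2 := by
            field_simp
        _ ≤ C * t ^ 2 := mul_le_mul_of_nonneg_right h3.le ht2.le
    rw [hl, eventually_nhdsWithin_iff] at h2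
    filter_upwards [h2] with t h2t
    by_cases ht : t = 0
    · subst ht; simp [hroot]
    · exact h2t (by simpa using ht)
  have hrb : ∀ᶠ e in l, |r e| ≤ C * (N e) ^ 2 := by
    filter_upwards [hN0.eventually hRb] with e he
    simpa [hr, hG] using he
  have hrs : Tendsto (fun e : ℝ => r e / e ^ 3) l (𝓝 0) := by
    apply squeeze_zero_norm' (a := fun e => (C * (N e / e ^ 2) ^ 2) * |e|)
    · filter_upwards [hrb, hene] with e hre he
      have he4 : (0:ℝ) < e ^ 4 := by positivity
      have habs : |e ^ 3| * |e| = e ^ 4 := by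
        rw [← abs_mul]
        have : e ^ 3 * e = e ^ 4 := by ring
        rw [this, abs_of_pos he4]
      have h5 : C * (N e / e ^ 2) ^ 2 * |e| = C * (N e) ^ 2 / |e ^ 3| := by
        rw [div_pow, eq_div_iff (by positivity : |e ^ 3| ≠ 0)]
        have he4' : (e:ℝ) ^ 4 ≠ 0 := ne_of_gt he4
        calc C * (N e ^ 2 / (e ^ 2) ^ 2) * |e| * |e ^ 3|
            = C * N e ^ 2 * (|e ^ 3| * |e|) / e ^ 4 := by ring
          _ = C * N e ^ 2 * e ^ 4 / e ^ 4 := by rw [habs]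
          _ = C * N e ^ 2 := by rw [mul_div_assoc, div_self he4', mul_one]
      rw [Real.norm_eq_abs, abs_div, h5]
      gcongr
    · have h6 : Tendsto (fun e : ℝ => (C * (N e / e ^ 2) ^ 2) * |e|) l (𝓝 ((C * c ^ 2) * |0|)) := by
        refine ((tendsto_const_nhds.mul (hn.pow 2)).mul ?_)
        exact (continuous_abs.tendsto (0:ℝ)).mono_left (nhdsWithin_le_nhds (s := {(0:ℝ)}ᶜ))
      simpa using h6
  -- G and F - G
  have hG2 : Tendsto (fun e : ℝ => G e / e ^ 2) l (𝓝 (a * c)) := by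
    have h1 : Tendsto (fun e : ℝ => (r e / e ^ 3) * e + a * (N e / e ^ 2)) l
        (𝓝 (0 * 0 + a * c)) := by
      refine ((hrs.mul ?_).add (tendsto_const_nhds.mul hn))
      exact tendsto_id.mono_left (nhdsWithin_le_nhds (s := {(0:ℝ)}ᶜ))
    have h2 := h1
    rw [show (0:ℝ) * 0 + a * c = a * c by ring] at h2
    apply h2.congr'
    filter_upwards [hene] with e he
    rw [hr]
    field_simp
    ring
  have hFG : Tendsto (fun e : ℝ => (F e - G e) / e) l (𝓝 a) := by
    have h1 : Tendsto (fun e : ℝ => F e / e - (G e / e ^ 2) * e) l (𝓝 (a - (a * c) * 0)) := by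
      refine (hu.sub (hG2.mul ?_))
      exact tendsto_id.mono_left (nhdsWithin_le_nhds (s := {(0:ℝ)}ᶜ))
    rw [show a - (a * c) * 0 = a by ring] at h1
    apply h1.congr'
    filter_upwards [hene] with e he
    field_simp
  have hFGne : ∀ᶠ e in l, F e - G e ≠ 0 := by
    filter_upwards [hFG.eventually_ne hder, hene] with e h1 he
    intro h0
    rw [h0] at h1
    simp at h1
  -- denominator and numerator
  have hden : Tendsto (fun e : ℝ => (F e - G e) * F' e / e) l (𝓝 (a * a)) := by
    have h1 := hFG.mul hv
    apply h1.congr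
    intro e
    rw [mul_div_right_comm]
  have hnum : Tendsto (fun e : ℝ =>
      (N e * (F e * (F' e - a) - a * N e * F' e) - r e * (N e * F' e + F e)) / e ^ 4) l
      (𝓝 (a * a * (c * c))) := by
    have h1 : Tendsto (fun e : ℝ =>
        (N e / e ^ 2) * ((F e / e) * ((F' e - a) / e) - a * (N e / e ^ 2) * F' e)
        - (r e / e ^ 3) * ((N e / e ^ 2) * F' e * e + F e / e)) l
        (𝓝 (c * (a * b - a * c * a) - 0 * (c * a * 0 + a))) := by
      refine (hn.mul ((hu.mul ht).sub ((tendsto_const_nhds.mul hn).mul hv))).sub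
        (hrs.mul (((hn.mul hv).mul ?_).add hu))
      exact tendsto_id.mono_left (nhdsWithin_le_nhds (s := {(0:ℝ)}ᶜ))
    have hbac : b = 2 * a * c := by
      rw [hc]; field_simp
    have h2 : c * (a * b - a * c * a) - 0 * (c * a * 0 + a) = a * a * (c * c) := by
      rw [hbac]; ring
    rw [h2] at h1
    apply h1.congr'
    filter_upwards [hene] with e he
    field_simp
  -- final assembly
  have hfin : Tendsto (fun e : ℝ =>
      ((N e * (F e * (F' e - a) - a * N e * F' e) - r e * (N e * F' e + F e)) / e ^ 4)
      / ((F e - G e) * F' e / e)) l (𝓝 (a * a * (c * c) / (a * a))) :=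
    hnum.div hden (mul_ne_zero hder hder)
  have hval : a * a * (c * c) / (a * a) = c ^ 2 := by
    field_simp
  rw [hval] at hfin
  have hgoal : (c : ℝ) ^ 2 = (b / (2 * a)) ^ 2 := by rw [hc]
  rw [← hgoal]
  have key : ∀ (E Fv F'v Gv : ℝ), E ≠ 0 → F'v ≠ 0 → Fv - Gv ≠ 0 →
      ∀ Nv rv : ℝ, Nv = E - Fv / F'v → rv = Gv - a * Nv →
      ((Nv * (Fv * (F'v - a) - a * Nv * F'v) - rv * (Nv * F'v + Fv)) / E ^ 4)
        / ((Fv - Gv) * F'v / E)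
      = (x₀ + E - Fv ^ 2 / ((Fv - Gv) * F'v) - x₀) / E ^ 3 := by
    intro E Fv F'v Gv hE hF'v hFGv Nv rv hNv hrv
    subst hNv hrv
    field_simp
    ring
  apply hfin.congr'
  filter_upwards [hene, hF'ne, hFGne] with e he hF'e hFGe
  have harg : x₀ + e - f (x₀ + e) / deriv f (x₀ + e) = x₀ + N e := by
    rw [hN, hF, hF']; ring
  show _ = (x₀ + e - (f (x₀ + e)) ^ 2 /
      ((f (x₀ + e) - f (x₀ + e - f (x₀ + e) / deriv f (x₀ + e))) * deriv f (x₀ + e)) - x₀) / e ^ 3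
  rw [harg]
  exact key e (F e) (F' e) (G e) he hF'e hFGe (N e) (r e) rfl rfl
end
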